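/- arXiv:2401.08479 — 3 statements merged into one kernel-verified Lean document; each statement's English description precedes it below -/
import Mathlib

section
/- Let f : S^1 → ℝ be continuous. Then the upper variation index equals the variation index: Ī(f) = I(f). -/
open Set Filter Metric Topology
open scoped ENNReal NNReal

noncomputable section

/-- A partition of `[0,1]` with `n+1` points `0 ≤ x₀ < x₁ < ⋯ < xₙ ≤ 1`. -/
def IsPartition (n : ℕ) (x : Fin (n + 1) → ℝ) : Prop :=
  StrictMono x ∧ ∀ i, x i ∈ Set.Icc (0 : ℝ) 1

/-- The variational sum `∑ |f(xᵢ) - f(xᵢ₊₁)|^p` of `f` along a partition. -/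
def varSum (f : ℝ → ℝ) (p : ℝ) (n : ℕ) (x : Fin (n + 1) → ℝ) : ℝ :=
  ∑ i : Fin n, |f (x i.castSucc) - f (x i.succ)| ^ p

/-- The `p`-variation `V^p(f)` of `f` over `[0,1]`. -/
def pVar (f : ℝ → ℝ) (p : ℝ) : ℝ≥0∞ :=
  ⨆ (n : ℕ) (x : Fin (n + 1) → ℝ) (_ : IsPartition n x), ENNReal.ofReal (varSum f p n x)

/-- The variation index `I(f) = sup {p ≥ 1 | V^p(f) = ∞}` (with `sup ∅ = 1`). -/
def varIndex (f : ℝ → ℝ) : ℝ≥0∞ :=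
  1 ⊔ ⨆ (p : ℝ) (_ : 1 ≤ p) (_ : pVar f p = ⊤), ENNReal.ofReal p

/-- The `(p,r)`-variation `V_r^p(f)`: the supremum of variational sums over partitions
all of whose increments satisfy `|f(xᵢ) - f(xᵢ₊₁)| = r`. -/
def prVar (f : ℝ → ℝ) (p r : ℝ) : ℝ≥0∞ :=
  ⨆ (n : ℕ) (x : Fin (n + 1) → ℝ) (_ : IsPartition n x)
    (_ : ∀ i : Fin n, |f (x i.castSucc) - f (x i.succ)| = r),
    ENNReal.ofReal (varSum f p n x)

/-- The upper variation content `V̄^p(f) = limsup_{r→0⁺} V_r^p(f)`. -/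
def uVarContent (f : ℝ → ℝ) (p : ℝ) : ℝ≥0∞ :=
  limsup (fun r => prVar f p r) (𝓝[>] (0 : ℝ))

/-- The lower variation content `V̲^p(f) = liminf_{r→0⁺} V_r^p(f)`. -/
def lVarContent (f : ℝ → ℝ) (p : ℝ) : ℝ≥0∞ :=
  liminf (fun r => prVar f p r) (𝓝[>] (0 : ℝ))

/-- The upper variation index `Ī(f) = sup {p ≥ 1 | V̄^p(f) = ∞}` (with `sup ∅ = 1`). -/
def upperVarIndex (f : ℝ → ℝ) : ℝ≥0∞ :=
  1 ⊔ ⨆ (p : ℝ) (_ : 1 ≤ p) (_ : uVarContent f p = ⊤), ENNReal.ofReal p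

/-- The lower variation index `I̲(f) = sup {p ≥ 1 | V̲^p(f) = ∞}` (with `sup ∅ = 1`). -/
def lowerVarIndex (f : ℝ → ℝ) : ℝ≥0∞ :=
  1 ⊔ ⨆ (p : ℝ) (_ : 1 ≤ p) (_ : lVarContent f p = ⊤), ENNReal.ofReal p

/-- The tree pseudometric `d_f(x,y) = f x + f y - 2 min_{[x∧y, x∨y]} f`. -/
def treeDist (f : ℝ → ℝ) (x y : ℝ) : ℝ :=
  f x + f y - 2 * sInf (f '' Set.uIcc x y)

/-- The maximal cardinality of an `r`-separated subset of `A` with respect to the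
(pseudo)distance `d`. -/
def Nsep {X : Type*} (d : X → X → ℝ) (A : Set X) (r : ℝ) : ℕ :=
  sSup {n | ∃ s : Finset X, (s : Set X) ⊆ A ∧ s.card = n ∧
    ∀ x ∈ s, ∀ y ∈ s, x ≠ y → r < d x y}

/-- Upper box dimension associated with a counting function `N`. -/
def ubdOf (N : ℝ → ℕ) : ℝ≥0∞ :=
  limsup (fun r : ℝ => ENNReal.ofReal (Real.log (N r : ℝ) / (-Real.log r))) (𝓝[>] (0 : ℝ))

/-- Lower box dimension associated with a counting function `N`. -/
def lbdOf (N : ℝ → ℕ) : ℝ≥0∞ :=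
  liminf (fun r : ℝ => ENNReal.ofReal (Real.log (N r : ℝ) / (-Real.log r))) (𝓝[>] (0 : ℝ))

/-- Upper box dimension of the real tree `T(g)` of an excursion `g`, computed through
`r`-separated subsets of `([0,1], d_g)` (these correspond exactly to `r`-separated subsets
of the metric quotient `T(g)`). -/
def ubdTree (g : ℝ → ℝ) : ℝ≥0∞ := ubdOf (fun r => Nsep (treeDist g) (Set.Icc 0 1) r)

/-- Lower box dimension of the real tree `T(g)` of an excursion `g`. -/
def lbdTree (g : ℝ → ℝ) : ℝ≥0∞ := lbdOf (fun r => Nsep (treeDist g) (Set.Icc 0 1) r)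

/-- The modified upper box dimension of the real tree `T(g)`:
the infimum over countable covers of `sup_i ubd`. -/
def umbdTree (g : ℝ → ℝ) : ℝ≥0∞ :=
  ⨅ (U : ℕ → Set ℝ) (_ : Set.Icc (0 : ℝ) 1 ⊆ ⋃ i, U i),
    ⨆ i, ubdOf (fun r => Nsep (treeDist g) (U i ∩ Set.Icc 0 1) r)

/-- The graph `Γ(g) = {(x, g x) | x ∈ [0,1]} ⊆ ℝ²`. -/
def graphSet (g : ℝ → ℝ) : Set (ℝ × ℝ) := {q | ∃ x ∈ Set.Icc (0 : ℝ) 1, q = (x, g x)}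

/-- Upper box dimension of the graph of `g` over `[0,1]`. -/
def ubdGraph (g : ℝ → ℝ) : ℝ≥0∞ :=
  ubdOf (fun r => Nsep (fun u v : ℝ × ℝ => dist u v) (graphSet g) r)

/-- `τ : ℝ → ℝ` is a lift of a homeomorphism of the circle `S¹ = ℝ/ℤ`. -/
def IsCircleHomeoLift (τ : ℝ → ℝ) : Prop :=
  Continuous τ ∧ Function.Bijective τ ∧
    ((∀ x, τ (x + 1) = τ x + 1) ∨ (∀ x, τ (x + 1) = τ x - 1))

end

noncomputable section

namespace VarChain

def hitSet (f : ℝ → ℝ) (r t : ℝ) : Set ℝ := Set.Icc t 1 ∩ {u | |f u - f t| = r}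

open Classical in
def chainStep (f : ℝ → ℝ) (r t : ℝ) : ℝ :=
  if (hitSet f r t).Nonempty then sInf (hitSet f r t) else t

def chainSeq (f : ℝ → ℝ) (r : ℝ) : ℕ → ℝ
  | 0 => 0
  | k + 1 => chainStep f r (chainSeq f r k)

variable {f : ℝ → ℝ} {r : ℝ}

lemma hitSet_isClosed (hf : Continuous f) (t : ℝ) : IsClosed (hitSet f r t) :=
  isClosed_Icc.inter (isClosed_singleton.preimage ((hf.sub continuous_const).abs))

lemma hitSet_bddBelow (t : ℝ) : BddBelow (hitSet f r t) :=
  ⟨t, fun _ hu => hu.1.1⟩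

lemma chainStep_mem (hf : Continuous f) {t : ℝ} (h : (hitSet f r t).Nonempty) :
    chainStep f r t ∈ hitSet f r t := by
  rw [chainStep, if_pos h]
  exact (hitSet_isClosed hf t).csInf_mem h (hitSet_bddBelow t)

lemma chainStep_self {t : ℝ} (h : ¬ (hitSet f r t).Nonempty) : chainStep f r t = t := by
  rw [chainStep, if_neg h]

lemma chainStep_le_sInf (hf : Continuous f) {t u : ℝ} (hu : u ∈ hitSet f r t) :
    chainStep f r t ≤ u := by
  rw [chainStep, if_pos ⟨u, hu⟩]
  exact csInf_le (hitSet_bddBelow t) hu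

/-- Basic bounds: the chain stays in `[0,1]` and is nondecreasing. -/
lemma chainSeq_mem (hf : Continuous f) : ∀ k, chainSeq f r k ∈ Set.Icc (0:ℝ) 1 ∧
    chainSeq f r k ≤ chainSeq f r (k + 1) := by
  intro k
  induction k with
  | zero =>
    constructor
    · exact ⟨le_refl 0, zero_le_one⟩
    · show (0:ℝ) ≤ chainStep f r (0:ℝ)
      by_cases h : (hitSet f r (0:ℝ)).Nonempty
      · exact le_trans (le_refl 0) (chainStep_mem hf h).1.1
      · rw [chainStep_self h]
  | succ k ih =>
    have hmem : chainSeq f r (k+1) ∈ Set.Icc (0:ℝ) 1 := by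
      show chainStep f r (chainSeq f r k) ∈ _
      by_cases h : (hitSet f r (chainSeq f r k)).Nonempty
      · have := (chainStep_mem hf h).1
        exact ⟨le_trans ih.1.1 this.1, this.2⟩
      · rw [chainStep_self h]; exact ih.1
    refine ⟨hmem, ?_⟩
    show chainSeq f r (k+1) ≤ chainStep f r (chainSeq f r (k+1))
    by_cases h : (hitSet f r (chainSeq f r (k+1))).Nonempty
    · exact (chainStep_mem hf h).1.1
    · rw [chainStep_self h]

lemma chainSeq_mono (hf : Continuous f) : Monotone (chainSeq f r) :=
  monotone_nat_of_le_succ fun k => (chainSeq_mem hf k).2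

/-- If the chain does not stall at step `k`, the step has increment exactly `r`
and is strictly increasing. -/
lemma chainSeq_step (hf : Continuous f) (hr : 0 < r) {k : ℕ}
    (h : chainSeq f r (k+1) ≠ chainSeq f r k) :
    chainSeq f r k < chainSeq f r (k+1) ∧
      |f (chainSeq f r (k+1)) - f (chainSeq f r k)| = r := by
  by_cases hne : (hitSet f r (chainSeq f r k)).Nonempty
  · have hm := chainStep_mem hf hne
    refine ⟨lt_of_le_of_ne (chainSeq_mem hf k).2 (Ne.symm h), hm.2⟩
  · exact absurd (chainStep_self hne) h

/-- Oscillation bound: between consecutive chain points (or after stalling),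
`f` stays within `r` of its value at the chain point. -/
lemma chain_osc (hf : Continuous f) (hr : 0 < r) (k : ℕ) {t : ℝ}
    (h1 : chainSeq f r k ≤ t) (h2 : t ≤ 1)
    (h3 : t < chainSeq f r (k+1) ∨ chainSeq f r (k+1) = chainSeq f r k) :
    |f t - f (chainSeq f r k)| < r := by
  set c := chainSeq f r k with hc
  have hB : ∀ u ∈ Set.Icc c t, |f u - f c| ≠ r := by
    intro u hu hru
    have huB : u ∈ hitSet f r c := ⟨⟨hu.1, hu.2.trans h2⟩, hru⟩
    have hle : chainSeq f r (k+1) ≤ u := chainStep_le_sInf hf huB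
    rcases h3 with h3 | h3
    · exact absurd ((hle.trans hu.2)) (not_le.mpr h3)
    · -- stalled: but then chainStep ∈ hitSet gives |f c - f c| = r, impossible
      have h5 : chainStep f r c ∈ {u | |f u - f c| = r} := (chainStep_mem hf ⟨u, huB⟩).2
      rw [show chainStep f r c = c from h3] at h5
      simp only [Set.mem_setOf_eq, sub_self, abs_zero] at h5
      exact absurd h5.symm (ne_of_gt hr)
  by_contra hge
  push_neg at hge
  have hcont : ContinuousOn (fun u => |f u - f c|) (Set.Icc c t) :=
    ((hf.sub continuous_const).abs).continuousOn
  have : r ∈ Set.Icc (|f c - f c|) (|f t - f c|) := by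
    simp only [sub_self, abs_zero]
    exact ⟨hr.le, hge⟩
  obtain ⟨u, hu, hgu⟩ := intermediate_value_Icc h1 hcont this
  exact hB u hu hgu

/-- The chain must eventually stall. -/
lemma chain_stalls (hf : Continuous f) (hr : 0 < r) :
    ∃ k, chainSeq f r (k+1) = chainSeq f r k := by
  by_contra h
  push_neg at h
  obtain ⟨δ, hδ, hunif⟩ : ∃ δ > 0, ∀ x ∈ Set.Icc (0:ℝ) 1, ∀ y ∈ Set.Icc (0:ℝ) 1,
      dist x y < δ → dist (f x) (f y) < r := by
    have := (isCompact_Icc (a := (0:ℝ)) (b := 1)).uniformContinuousOn_of_continuous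
      hf.continuousOn
    rw [Metric.uniformContinuousOn_iff] at this
    obtain ⟨δ, hδ, hd⟩ := this r hr
    exact ⟨δ, hδ, fun x hx y hy hxy => hd x hx y hy hxy⟩
  have hstep : ∀ k, chainSeq f r k + δ ≤ chainSeq f r (k+1) := by
    intro k
    have hs := chainSeq_step hf hr (h k)
    have h1 := (chainSeq_mem (r := r) hf k).1
    have h2 := (chainSeq_mem (r := r) hf (k+1)).1
    by_contra hlt
    push_neg at hlt
    have : dist (chainSeq f r (k+1)) (chainSeq f r k) < δ := by
      rw [Real.dist_eq, abs_of_nonneg (sub_nonneg.mpr hs.1.le)]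
      linarith
    have := hunif _ h2 _ h1 this
    rw [Real.dist_eq] at this
    exact absurd hs.2 (ne_of_lt this)
  have hlow : ∀ k : ℕ, (k : ℝ) * δ ≤ chainSeq f r k := by
    intro k
    induction k with
    | zero => simp [chainSeq]
    | succ k ih =>
      have := hstep k
      push_cast
      linarith
  obtain ⟨k, hk⟩ := exists_nat_gt (1 / δ)
  have h1 := (chainSeq_mem (r := r) hf k).1.2
  have h2 : (k:ℝ) * δ ≤ 1 := (hlow k).trans h1
  rw [div_lt_iff₀ hδ] at hk
  linarith


/-- The main chain counting lemma: the number of partition increments of size `≥ 2r`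
bounds from below a constrained chain, giving a lower bound on `prVar`. -/
lemma chain_count (hf : Continuous f) (hr : 0 < r) (q : ℝ) (n : ℕ) (x : Fin (n+1) → ℝ)
    (hx : IsPartition n x) :
    ENNReal.ofReal (((Finset.univ.filter
        (fun i : Fin n => 2*r ≤ |f (x i.castSucc) - f (x i.succ)|)).card : ℝ) * r ^ q)
      ≤ prVar f q r := by
  classical
  set s : ℕ → ℝ := chainSeq f r with hs
  set K : ℕ := Nat.find (chain_stalls hf hr) with hKdef
  have hK : s (K+1) = s K := Nat.find_spec (chain_stalls hf hr)
  have hKmin : ∀ k < K, s (k+1) ≠ s k := fun k hk => Nat.find_min (chain_stalls hf hr) hk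
  have hstep : ∀ k < K, s k < s (k+1) ∧ |f (s (k+1)) - f (s k)| = r :=
    fun k hk => chainSeq_step hf hr (hKmin k hk)
  have smono : ∀ a b : ℕ, a < b → b ≤ K → s a < s b := by
    intro a b hab hbK
    induction b with
    | zero => omega
    | succ b ih =>
      rcases Nat.lt_succ_iff_lt_or_eq.mp hab with h | h
      · exact lt_of_lt_of_le (ih h (by omega)) (chainSeq_mem hf b).2
      · subst h; exact (hstep a (by omega)).1
  -- the index function φ
  set φ : ℝ → ℕ := fun t => sSup {k | k ≤ K ∧ s k ≤ t} with hφ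
  have hbdd : ∀ t, BddAbove {k | k ≤ K ∧ s k ≤ t} := fun t => ⟨K, fun k hk => hk.1⟩
  have hne : ∀ t, 0 ≤ t → (0:ℕ) ∈ {k | k ≤ K ∧ s k ≤ t} := by
    intro t ht
    exact ⟨Nat.zero_le K, by show chainSeq f r 0 ≤ t; rw [chainSeq]; exact ht⟩
  have hφmem : ∀ t, 0 ≤ t → φ t ≤ K ∧ s (φ t) ≤ t := by
    intro t ht
    exact Nat.sSup_mem ⟨0, hne t ht⟩ (hbdd t)
  have hφmono : ∀ t t', 0 ≤ t → t ≤ t' → φ t ≤ φ t' := by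
    intro t t' ht htt'
    have h1 := hφmem t ht
    exact le_csSup (hbdd t') ⟨h1.1, h1.2.trans htt'⟩
  have hφlt : ∀ t, 0 ≤ t → φ t < K → t < s (φ t + 1) := by
    intro t ht hlt
    by_contra hge
    push_neg at hge
    have : φ t + 1 ≤ φ t := le_csSup (hbdd t) ⟨by omega, hge⟩
    omega
  have hφosc : ∀ t, t ∈ Set.Icc (0:ℝ) 1 → |f t - f (s (φ t))| < r := by
    intro t ht
    refine chain_osc hf hr (φ t) (hφmem t ht.1).2 ht.2 ?_
    rcases lt_or_eq_of_le (hφmem t ht.1).1 with h | h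
    · exact Or.inl (hφlt t ht.1 h)
    · rw [h]; exact Or.inr hK
  have hsep : ∀ t u, t ∈ Set.Icc (0:ℝ) 1 → u ∈ Set.Icc (0:ℝ) 1 → t ≤ u →
      2*r ≤ |f t - f u| → φ t < φ u := by
    intro t u ht hu htu habs
    rcases lt_or_eq_of_le (hφmono t u ht.1 htu) with h | h
    · exact h
    have h1 := hφosc t ht
    have h2 := hφosc u hu
    rw [h] at h1
    have : |f t - f u| ≤ |f t - f (s (φ u))| + |f u - f (s (φ u))| := by
      have := abs_sub_abs_le_abs_sub (f t - f (s (φ u))) (f u - f (s (φ u)))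
      calc |f t - f u| = |(f t - f (s (φ u))) - (f u - f (s (φ u)))| := by ring_nf
        _ ≤ _ := abs_sub _ _
    linarith
  -- the chain as a constrained partition
  set y : Fin (K+1) → ℝ := fun j => s (j : ℕ) with hy
  have hypart : IsPartition K y := by
    constructor
    · intro a b hab
      exact smono a b hab (Fin.is_le b)
    · intro i; exact (chainSeq_mem hf (i:ℕ)).1
  have hysteps : ∀ i : Fin K, |f (y i.castSucc) - f (y i.succ)| = r := by
    intro i
    have := (hstep (i:ℕ) i.isLt).2
    rw [hy]
    simp only [Fin.coe_castSucc, Fin.val_succ]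
    rw [abs_sub_comm]
    exact this
  have hvar : varSum f q K y = (K : ℝ) * r ^ q := by
    rw [varSum]
    rw [Finset.sum_congr rfl (fun i _ => by rw [hysteps i])]
    rw [Finset.sum_const, Finset.card_univ, Fintype.card_fin, nsmul_eq_mul]
  -- counting
  set m : ℕ → ℕ := fun j => φ (x ⟨min j n, by omega⟩) with hm
  have hmmono : Monotone m := by
    intro a b hab
    refine hφmono _ _ (hx.2 _).1 ?_
    exact (hx.1.monotone (by simp [Fin.mk_le_mk]; omega))
  have hkey : ∀ i : Fin n, 2*r ≤ |f (x i.castSucc) - f (x i.succ)| →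
      m (i:ℕ) + 1 ≤ m ((i:ℕ)+1) := by
    intro i hi
    have e1 : (⟨min (i:ℕ) n, by omega⟩ : Fin (n+1)) = i.castSucc := by
      apply Fin.ext; simp [Fin.coe_castSucc]; try omega
    have e2 : (⟨min ((i:ℕ)+1) n, by omega⟩ : Fin (n+1)) = i.succ := by
      apply Fin.ext; simp [Fin.val_succ]; try omega
    have := hsep (x i.castSucc) (x i.succ) (hx.2 _) (hx.2 _)
      (le_of_lt (hx.1 (Fin.castSucc_lt_succ : i.castSucc < i.succ))) hi
    simp only [hm, e1, e2]
    omega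
  have hcard : (Finset.univ.filter
      (fun i : Fin n => 2*r ≤ |f (x i.castSucc) - f (x i.succ)|)).card ≤ K := by
    rw [Finset.card_filter]
    have h1 : ∀ i : Fin n, (if 2*r ≤ |f (x i.castSucc) - f (x i.succ)| then 1 else 0)
        ≤ m ((i:ℕ)+1) - m (i:ℕ) := by
      intro i
      by_cases h : 2*r ≤ |f (x i.castSucc) - f (x i.succ)|
      · rw [if_pos h]; have := hkey i h; omega
      · rw [if_neg h]; omega
    calc (∑ i : Fin n, if 2*r ≤ |f (x i.castSucc) - f (x i.succ)| then 1 else 0)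
        ≤ ∑ i : Fin n, (m ((i:ℕ)+1) - m (i:ℕ)) := Finset.sum_le_sum (fun i _ => h1 i)
      _ = ∑ j ∈ Finset.range n, (m (j+1) - m j) :=
          Fin.sum_univ_eq_sum_range (fun j => m (j+1) - m j) n
      _ = m n - m 0 := Finset.sum_range_tsub hmmono n
      _ ≤ K := by
          have := (hφmem (x ⟨min n n, by omega⟩) (hx.2 _).1).1
          simp only [hm]
          omega
  -- conclude
  have hrq : (0:ℝ) ≤ r ^ q := Real.rpow_nonneg hr.le q
  calc ENNReal.ofReal (((Finset.univ.filter
        (fun i : Fin n => 2*r ≤ |f (x i.castSucc) - f (x i.succ)|)).card : ℝ) * r ^ q)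
      ≤ ENNReal.ofReal ((K : ℝ) * r ^ q) := by
        apply ENNReal.ofReal_le_ofReal
        apply mul_le_mul_of_nonneg_right _ hrq
        exact_mod_cast hcard
    _ = ENNReal.ofReal (varSum f q K y) := by rw [hvar]
    _ ≤ prVar f q r := by
        rw [prVar]
        exact le_iSup_of_le K (le_iSup_of_le y (le_iSup_of_le hypart
          (le_iSup_of_le hysteps le_rfl)))

end VarChain

open VarChain in
/-- Core lemma: if `V^p(f) = ∞` and `1 ≤ q < p`, then arbitrarily small `r` realize
arbitrarily large constrained variation. -/
lemma core_lemma (f : ℝ → ℝ) (hf : Continuous f) {p q : ℝ} (hq1 : 1 ≤ q) (hqp : q < p)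
    (hp : pVar f p = ⊤) {C ε : ℝ} (hC : 0 < C) (hε : 0 < ε) :
    ∃ r, r ∈ Set.Ioo (0:ℝ) ε ∧ ENNReal.ofReal C ≤ prVar f q r := by
  classical
  by_contra hcon
  push_neg at hcon
  have hp0 : (0:ℝ) < p := by linarith
  have hq0 : (0:ℝ) < q := by linarith
  -- A global bound on increments
  obtain ⟨A0, hA0⟩ := isCompact_Icc.exists_bound_of_continuousOn
    (hf.continuousOn (s := Set.Icc (0:ℝ) 1))
  set A : ℝ := |A0| + |A0| + 1 with hAdef
  have hApos : 0 < A := by positivity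
  have hAbd : ∀ s t, s ∈ Set.Icc (0:ℝ) 1 → t ∈ Set.Icc (0:ℝ) 1 → |f s - f t| ≤ A := by
    intro s t hs ht
    have h1 := (hA0 s hs).trans (le_abs_self A0)
    have h2 := (hA0 t ht).trans (le_abs_self A0)
    rw [Real.norm_eq_abs] at h1 h2
    calc |f s - f t| ≤ |f s| + |f t| := abs_sub _ _
      _ ≤ A := by rw [hAdef]; linarith
  -- scale cutoff
  obtain ⟨k₀, hk₀⟩ : ∃ k : ℕ, A / 2^k < ε := by
    obtain ⟨k, hk⟩ := pow_unbounded_of_one_lt (A / ε) (one_lt_two (α := ℝ))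
    refine ⟨k, ?_⟩
    rw [div_lt_iff₀ (by positivity : (0:ℝ) < 2^k)]
    rw [div_lt_iff₀ hε] at hk
    nlinarith [hk]
  set b : ℝ := A / 2^(k₀+1) with hbdef
  have hbpos : 0 < b := by positivity
  -- uniform continuity at scale b
  obtain ⟨δ, hδ, hunif⟩ : ∃ δ > 0, ∀ s ∈ Set.Icc (0:ℝ) 1, ∀ t ∈ Set.Icc (0:ℝ) 1,
      dist s t < δ → dist (f s) (f t) < b := by
    have := (isCompact_Icc (a := (0:ℝ)) (b := 1)).uniformContinuousOn_of_continuous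
      hf.continuousOn
    rw [Metric.uniformContinuousOn_iff] at this
    obtain ⟨δ, hδ, hd⟩ := this b hbpos
    exact ⟨δ, hδ, fun s hs t ht hst => hd s hs t ht hst⟩
  -- geometric ratio
  set w : ℝ := ((2:ℝ) ^ (p - q))⁻¹ with hwdef
  have h2pq : 1 < (2:ℝ) ^ (p - q) :=
    (Real.one_lt_rpow_iff_of_pos two_pos).mpr (Or.inl ⟨one_lt_two, by linarith⟩)
  have hw0 : 0 ≤ w := by rw [hwdef]; positivity
  have hw1 : w < 1 := inv_lt_one_of_one_lt₀ h2pq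
  set Ctot : ℝ := (1/δ) * A ^ p + C * (16:ℝ) ^ q * A ^ (p - q) * (1 - w)⁻¹ with hCtot
  -- the per-partition bound
  have hbound : ∀ n (x : Fin (n+1) → ℝ), IsPartition n x → varSum f p n x ≤ Ctot := by
    intro n x hx
    set a : Fin n → ℝ := fun i => |f (x i.castSucc) - f (x i.succ)| with hadef
    have ha0 : ∀ i, 0 ≤ a i := fun i => abs_nonneg _
    have haA : ∀ i, a i ≤ A := fun i => hAbd _ _ (hx.2 _) (hx.2 _)
    set c : Fin n → ℕ := fun i => ⌊Real.logb 2 (A / a i)⌋₊ with hcdef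
    have hclass : ∀ i, 0 < a i → A / 2^(c i + 1) < a i ∧ a i ≤ A / 2^(c i) := by
      intro i hi
      have hAa : 1 ≤ A / a i := (one_le_div hi).mpr (haA i)
      have hlogb0 : 0 ≤ Real.logb 2 (A / a i) := Real.logb_nonneg one_lt_two hAa
      have hfl : (c i : ℝ) ≤ Real.logb 2 (A / a i) := Nat.floor_le hlogb0
      have hfl2 : Real.logb 2 (A / a i) < (c i : ℝ) + 1 := Nat.lt_floor_add_one _
      have hpos : 0 < A / a i := by positivity
      have hre : (2:ℝ) ^ Real.logb 2 (A / a i) = A / a i :=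
        Real.rpow_logb two_pos (by norm_num) hpos
      constructor
      · have h1 : A / a i < (2:ℝ) ^ ((c i : ℝ) + 1) := by
          rw [← hre]; exact Real.rpow_lt_rpow_of_exponent_lt one_lt_two hfl2
        rw [show ((c i : ℝ) + 1) = ((c i + 1 : ℕ) : ℝ) by push_cast; ring,
          Real.rpow_natCast] at h1
        rw [div_lt_iff₀ (by positivity)]
        rw [div_lt_iff₀ hi] at h1
        linarith
      · have h1 : (2:ℝ) ^ ((c i : ℝ)) ≤ A / a i := by
          rw [← hre]; exact Real.rpow_le_rpow_of_exponent_le one_le_two hfl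
        rw [Real.rpow_natCast] at h1
        rw [le_div_iff₀ (by positivity)]
        rw [le_div_iff₀ hi] at h1
        linarith
    set P : Fin n → Prop := fun i => 0 < a i ∧ a i ≤ b with hPdef
    rw [varSum]
    have hsplit : ∑ i : Fin n, a i ^ p
        = ∑ i ∈ Finset.univ.filter P, a i ^ p
          + ∑ i ∈ Finset.univ.filter (fun i => ¬ P i), a i ^ p :=
      (Finset.sum_filter_add_sum_filter_not _ _ _).symm
    -- bad part
    have hbad : ∑ i ∈ Finset.univ.filter (fun i => ¬ P i), a i ^ p ≤ (1/δ) * A ^ p := by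
      have hterm : ∀ i ∈ Finset.univ.filter (fun i => ¬ P i),
          a i ^ p ≤ (if b < a i then A ^ p else 0) := by
        intro i hi
        rw [Finset.mem_filter] at hi
        by_cases hcase : b < a i
        · rw [if_pos hcase]
          exact Real.rpow_le_rpow (ha0 i) (haA i) hp0.le
        · rw [if_neg hcase]
          have hzero : a i = 0 := by
            rcases eq_or_lt_of_le (ha0 i) with h | h
            · exact h.symm
            · exact absurd ⟨h, not_lt.mp hcase⟩ hi.2
          rw [hzero, Real.zero_rpow (ne_of_gt hp0)]
      have hδcard : ((Finset.univ.filter (fun i => b < a i)).card : ℝ) * δ ≤ 1 := by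
        have hd : ∀ i ∈ Finset.univ.filter (fun i => b < a i),
            δ ≤ x i.succ - x i.castSucc := by
          intro i hi
          rw [Finset.mem_filter] at hi
          by_contra hlt
          push_neg at hlt
          have hxy : x i.castSucc ≤ x i.succ := le_of_lt (hx.1 (Fin.castSucc_lt_succ : i.castSucc < i.succ))
          have : dist (x i.castSucc) (x i.succ) < δ := by
            rw [Real.dist_eq, abs_of_nonpos (by linarith)]
            linarith
          have := hunif _ (hx.2 _) _ (hx.2 _) this
          rw [Real.dist_eq] at this
          exact absurd hi.2 (not_lt.mpr this.le)
        set X : ℕ → ℝ := fun j => x ⟨min j n, by omega⟩ with hXdef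
        have htel : ∑ i : Fin n, (x i.succ - x i.castSucc) ≤ 1 := by
          have he : ∀ i : Fin n, x i.succ - x i.castSucc = X ((i:ℕ)+1) - X (i:ℕ) := by
            intro i
            have e1 : (⟨min (i:ℕ) n, by omega⟩ : Fin (n+1)) = i.castSucc := by
              apply Fin.ext; simp [Fin.coe_castSucc]; try omega
            have e2 : (⟨min ((i:ℕ)+1) n, by omega⟩ : Fin (n+1)) = i.succ := by
              apply Fin.ext; simp [Fin.val_succ]; try omega
            rw [hXdef]; simp only [e1, e2]
          calc ∑ i : Fin n, (x i.succ - x i.castSucc)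
              = ∑ i : Fin n, (X ((i:ℕ)+1) - X (i:ℕ)) := Finset.sum_congr rfl (fun i _ => he i)
            _ = ∑ j ∈ Finset.range n, (X (j+1) - X j) :=
                Fin.sum_univ_eq_sum_range (fun j => X (j+1) - X j) n
            _ = X n - X 0 := Finset.sum_range_sub X n
            _ ≤ 1 := by
                have h1 := (hx.2 (⟨min n n, by omega⟩ : Fin (n+1))).2
                have h2 := (hx.2 (⟨min 0 n, by omega⟩ : Fin (n+1))).1
                rw [hXdef]; simp only; linarith
        calc ((Finset.univ.filter (fun i => b < a i)).card : ℝ) * δ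
            = ∑ _i ∈ Finset.univ.filter (fun i => b < a i), δ := by
              rw [Finset.sum_const, nsmul_eq_mul]
          _ ≤ ∑ i ∈ Finset.univ.filter (fun i => b < a i), (x i.succ - x i.castSucc) :=
              Finset.sum_le_sum hd
          _ ≤ ∑ i : Fin n, (x i.succ - x i.castSucc) :=
              Finset.sum_le_sum_of_subset_of_nonneg (Finset.filter_subset _ _)
                (fun i _ _ => le_of_lt (sub_pos.mpr (hx.1 (Fin.castSucc_lt_succ : i.castSucc < i.succ))))
          _ ≤ 1 := htel
      have hcard : ((Finset.univ.filter (fun i => b < a i)).card : ℝ) ≤ 1/δ := by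
        rw [le_div_iff₀ hδ]; linarith
      calc ∑ i ∈ Finset.univ.filter (fun i => ¬ P i), a i ^ p
          ≤ ∑ i ∈ Finset.univ.filter (fun i => ¬ P i), (if b < a i then A ^ p else 0) :=
            Finset.sum_le_sum hterm
        _ ≤ ∑ i : Fin n, (if b < a i then A ^ p else 0) :=
            Finset.sum_le_sum_of_subset_of_nonneg (Finset.filter_subset _ _)
              (by
                intro i _ _
                split_ifs with h
                · positivity
                · exact le_rfl)
        _ = ∑ i ∈ Finset.univ.filter (fun i => b < a i), A ^ p :=
            (Finset.sum_filter _ _).symm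
        _ = ((Finset.univ.filter (fun i => b < a i)).card : ℝ) * A ^ p := by
            rw [Finset.sum_const, nsmul_eq_mul]
        _ ≤ (1/δ) * A ^ p := by
            apply mul_le_mul_of_nonneg_right hcard (by positivity)
    -- good part
    have hgood : ∑ i ∈ Finset.univ.filter P, a i ^ p
        ≤ C * (16:ℝ) ^ q * A ^ (p - q) * (1 - w)⁻¹ := by
      set g : ℕ → ℝ := fun k => (A / 2^k) ^ p with hgdef
      have hterm : ∀ i ∈ Finset.univ.filter P, a i ^ p ≤ g (c i) := by
        intro i hi
        rw [Finset.mem_filter] at hi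
        exact Real.rpow_le_rpow (ha0 i) (hclass i hi.2.1).2 hp0.le
      have htermb : ∀ k ∈ (Finset.univ.filter P).image c,
          ((Finset.univ.filter P).filter (fun i => c i = k)).card • g k
            ≤ C * (16:ℝ) ^ q * A ^ (p - q) * w ^ k := by
        intro k hk
        obtain ⟨i₀, hi₀, hci₀⟩ := Finset.mem_image.mp hk
        rw [Finset.mem_filter] at hi₀
        -- k ≥ k₀
        have hkk₀ : k₀ ≤ k := by
          by_contra hlt
          push_neg at hlt
          have h1 := (hclass i₀ hi₀.2.1).1
          rw [hci₀] at h1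
          have h2 : a i₀ ≤ A / 2^(k₀+1) := hi₀.2.2
          have h3 : A / 2^(k₀+1) ≤ A / 2^(k+1) := by
            apply div_le_div_of_nonneg_left hApos.le (by positivity)
            exact pow_le_pow_right₀ one_le_two (by omega)
          linarith
        set r : ℝ := A / 2^(k+4) with hrdef
        have hr : 0 < r := by positivity
        have hrε : r < ε := by
          have h1 : r ≤ A / 2^k₀ := by
            apply div_le_div_of_nonneg_left hApos.le (by positivity)
            exact pow_le_pow_right₀ one_le_two (by omega)
          linarith
        have h8r : A / 2^(k+1) = 8 * r := by
          rw [hrdef]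
          rw [show (k+4) = (k+1) + 3 by ring, pow_add]
          field_simp; ring
        -- class members are large increments
        have hsub : (Finset.univ.filter P).filter (fun i => c i = k)
            ⊆ Finset.univ.filter (fun i : Fin n => 2*r ≤ a i) := by
          intro i hi
          simp only [Finset.mem_filter] at hi ⊢
          refine ⟨Finset.mem_univ i, ?_⟩
          have h1 := (hclass i hi.1.2.1).1
          rw [hi.2] at h1
          rw [h8r] at h1
          linarith
        have hcount := Finset.card_le_card hsub
        -- the count bound from the chain lemma and hcon
        have hchain := chain_count (f := f) hf hr q n x hx
        have hprv := hcon r ⟨hr, hrε⟩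
        have hlt : ((Finset.univ.filter (fun i : Fin n => 2*r ≤ a i)).card : ℝ) * r ^ q
            < C := by
          have := lt_of_le_of_lt hchain hprv
          exact (ENNReal.ofReal_lt_ofReal_iff hC).mp this
        have hclasscard : (((Finset.univ.filter P).filter (fun i => c i = k)).card : ℝ)
            * r ^ q ≤ C := by
          refine le_of_lt (lt_of_le_of_lt ?_ hlt)
          apply mul_le_mul_of_nonneg_right _ (Real.rpow_nonneg hr.le q)
          exact_mod_cast hcount
        -- algebra: g k = r^q * (16^q * (A^(p-q) * w^k))
        have hA2k : A / 2^k = 16 * r := by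
          rw [hrdef, show (k+4) = k + 4 by rfl, pow_add]
          field_simp; ring
        have hb2 : (0:ℝ) < A / 2^k := by positivity
        have hgk : g k = r ^ q * ((16:ℝ) ^ q * (A ^ (p - q) * w ^ k)) := by
          have e1 : g k = (A / 2^k) ^ q * (A / 2^k) ^ (p - q) := by
            rw [hgdef]
            rw [← Real.rpow_add hb2, show q + (p - q) = p by ring]
          have e2 : (A / 2^k) ^ q = (16:ℝ) ^ q * r ^ q := by
            rw [hA2k, Real.mul_rpow (by norm_num) hr.le]
          have e3 : (A / 2^k) ^ (p - q) = A ^ (p - q) * w ^ k := by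
            rw [Real.div_rpow hApos.le (by positivity)]
            have : ((2:ℝ)^k) ^ (p - q) = ((2:ℝ) ^ (p - q)) ^ k := by
              rw [← Real.rpow_natCast (2:ℝ) k, ← Real.rpow_mul two_pos.le,
                mul_comm, Real.rpow_mul two_pos.le, Real.rpow_natCast]
            rw [this, hwdef, div_eq_mul_inv, inv_pow]
          rw [e1, e2, e3]; ring
        rw [nsmul_eq_mul, hgk]
        calc (((Finset.univ.filter P).filter (fun i => c i = k)).card : ℝ)
            * (r ^ q * ((16:ℝ) ^ q * (A ^ (p - q) * w ^ k)))
            = ((((Finset.univ.filter P).filter (fun i => c i = k)).card : ℝ) * r ^ q)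
              * ((16:ℝ) ^ q * (A ^ (p - q) * w ^ k)) := by ring
          _ ≤ C * ((16:ℝ) ^ q * (A ^ (p - q) * w ^ k)) := by
              apply mul_le_mul_of_nonneg_right hclasscard
              positivity
          _ = C * (16:ℝ) ^ q * A ^ (p - q) * w ^ k := by ring
      have hgeo : ∑ k ∈ (Finset.univ.filter P).image c, w ^ k ≤ (1 - w)⁻¹ := by
        refine le_trans ((summable_geometric_of_lt_one hw0 hw1).sum_le_tsum _
          (fun k _ => pow_nonneg hw0 k)) ?_
        rw [tsum_geometric_of_lt_one hw0 hw1]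
      calc ∑ i ∈ Finset.univ.filter P, a i ^ p
          ≤ ∑ i ∈ Finset.univ.filter P, g (c i) := Finset.sum_le_sum hterm
        _ = ∑ k ∈ (Finset.univ.filter P).image c,
              ((Finset.univ.filter P).filter (fun i => c i = k)).card • g k :=
            Finset.sum_comp g c
        _ ≤ ∑ k ∈ (Finset.univ.filter P).image c,
              C * (16:ℝ) ^ q * A ^ (p - q) * w ^ k := Finset.sum_le_sum htermb
        _ = C * (16:ℝ) ^ q * A ^ (p - q) * ∑ k ∈ (Finset.univ.filter P).image c, w ^ k := by
            rw [Finset.mul_sum]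
        _ ≤ C * (16:ℝ) ^ q * A ^ (p - q) * (1 - w)⁻¹ := by
            apply mul_le_mul_of_nonneg_left hgeo (by positivity)
    rw [hsplit, hCtot]
    linarith
  -- conclude: pVar is finite, contradiction
  have hle : pVar f p ≤ ENNReal.ofReal Ctot := by
    rw [pVar]
    exact iSup_le fun n => iSup_le fun x => iSup_le fun hx =>
      ENNReal.ofReal_le_ofReal (hbound n x hx)
  rw [hp] at hle
  exact ENNReal.ofReal_ne_top (top_le_iff.mp hle)

lemma prVar_le_pVar (f : ℝ → ℝ) (p r : ℝ) : prVar f p r ≤ pVar f p := by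
  rw [prVar, pVar]
  exact iSup_le fun n => iSup_le fun x => iSup_le fun h1 => iSup_le fun _ =>
    le_iSup_of_le n (le_iSup_of_le x (le_iSup_of_le h1 le_rfl))

lemma uVarContent_le_pVar (f : ℝ → ℝ) (p : ℝ) : uVarContent f p ≤ pVar f p := by
  rw [uVarContent]
  calc limsup (fun r => prVar f p r) (𝓝[>] (0:ℝ))
      ≤ limsup (fun _ => pVar f p) (𝓝[>] (0:ℝ)) :=
        limsup_le_limsup (Filter.Eventually.of_forall fun r => prVar_le_pVar f p r)
    _ = pVar f p := limsup_const _

lemma uVarContent_top (f : ℝ → ℝ) (hf : Continuous f) {p q : ℝ} (hq1 : 1 ≤ q) (hqp : q < p)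
    (hp : pVar f p = ⊤) : uVarContent f q = ⊤ := by
  rw [uVarContent, Filter.limsup_eq]
  refine top_unique (le_sInf fun a ha => ?_)
  rw [Set.mem_setOf_eq] at ha
  by_contra htop
  have hatop : a ≠ ⊤ := fun h => htop (h ▸ le_rfl)
  set C : ℝ := a.toReal + 1 with hCdef
  have hCpos : 0 < C := by positivity
  rw [Filter.eventually_iff] at ha
  obtain ⟨u, hu, hsub⟩ := mem_nhdsGT_iff_exists_Ioo_subset.mp ha
  obtain ⟨r, hr, hge⟩ := core_lemma f hf hq1 hqp hp hCpos hu
  have h1 : prVar f q r ≤ a := hsub hr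
  have h2 : ENNReal.ofReal C ≤ a := le_trans hge h1
  have h3 : a < ENNReal.ofReal C := by
    rw [ENNReal.lt_ofReal_iff_toReal_lt hatop]
    rw [hCdef]; linarith
  exact absurd h2 (not_le.mpr h3)

/-- The upper variation index coincides with the variation index: `Ī(f) = I(f)`. -/
theorem upperVarIndex_eq_varIndex (f : ℝ → ℝ) (hf : Continuous f)
    (hper : ∀ x, f (x + 1) = f x) :
    upperVarIndex f = varIndex f := by
  apply le_antisymm
  · rw [upperVarIndex, varIndex]
    refine sup_le le_sup_left ?_
    refine iSup_le fun p => iSup_le fun hp => iSup_le fun htop => ?_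
    have hpv : pVar f p = ⊤ := top_le_iff.mp (htop ▸ uVarContent_le_pVar f p)
    exact le_sup_of_le_right (le_iSup_of_le p (le_iSup_of_le hp (le_iSup_of_le hpv le_rfl)))
  · rw [varIndex]
    refine sup_le (by rw [upperVarIndex]; exact le_sup_left) ?_
    refine iSup_le fun p => iSup_le fun hp1 => iSup_le fun hptop => ?_
    refine ENNReal.le_of_forall_pos_le_add fun ε hε _ => ?_
    rcases eq_or_lt_of_le hp1 with hp1' | hplt
    · have he : ENNReal.ofReal p = 1 := by rw [← hp1']; simp
      rw [he]
      exact le_add_right (by rw [upperVarIndex]; exact le_sup_left)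
    · have hεpos : (0:ℝ) < (ε:ℝ) := hε
      set q : ℝ := max 1 (p - (ε:ℝ)) with hqdef
      have hq1 : 1 ≤ q := le_max_left _ _
      have hqp : q < p := max_lt hplt (by linarith)
      have hcont := uVarContent_top f hf hq1 hqp hptop
      have h1 : ENNReal.ofReal q ≤ upperVarIndex f := by
        rw [upperVarIndex]
        exact le_sup_of_le_right (le_iSup_of_le q (le_iSup_of_le hq1
          (le_iSup_of_le hcont le_rfl)))
      have hpq : p ≤ q + (ε:ℝ) := by
        have := le_max_right 1 (p - (ε:ℝ))
        rw [hqdef]; linarith [le_max_right 1 (p - (ε:ℝ))]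
      calc ENNReal.ofReal p ≤ ENNReal.ofReal (q + (ε:ℝ)) := ENNReal.ofReal_le_ofReal hpq
        _ = ENNReal.ofReal q + ENNReal.ofReal (ε:ℝ) :=
            ENNReal.ofReal_add (by linarith) hεpos.le
        _ = ENNReal.ofReal q + (ε : ℝ≥0∞) := by rw [ENNReal.ofReal_coe_nnreal]
        _ ≤ upperVarIndex f + (ε : ℝ≥0∞) := add_le_add_left h1 _

end
end

section
/- Let f : S^1 → ℝ be continuous and non-constant. Then the lower box dimension of the real tree T(f) equals the lower variation index, and the upper box dimension of T(f) equals the upper variation index: lbd T(f) = I̲(f) and ubd T(f) = Ī(f). -/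
open Set Filter Metric Topology
open scoped ENNReal NNReal

noncomputable section

namespace TreeAux

/-- chains indexed by ℕ -/
def WChain (φ : ℝ → ℝ) (r : ℝ) (n : ℕ) (x : ℕ → ℝ) : Prop :=
  (∀ i < n, x i < x (i + 1)) ∧ (∀ i ≤ n, x i ∈ Set.Icc (0 : ℝ) 1) ∧
    (∀ i < n, |φ (x i) - φ (x (i + 1))| = r)

def chainSet (φ : ℝ → ℝ) (r : ℝ) : Set ℕ := {n | ∃ x : ℕ → ℝ, WChain φ r n x}

def Mc (φ : ℝ → ℝ) (r : ℝ) : ℕ := sSup (chainSet φ r)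

theorem WChain.mono {φ : ℝ → ℝ} {r : ℝ} {n : ℕ} {x : ℕ → ℝ} (h : WChain φ r n x)
    {i j : ℕ} (hij : i < j) (hj : j ≤ n) : x i < x j := by
  induction j with
  | zero => omega
  | succ k ih =>
    rcases Nat.lt_succ_iff_lt_or_eq.1 hij with h' | h'
    · exact lt_trans (ih h' (by omega)) (h.1 k (by omega))
    · subst h'; exact h.1 i (by omega)

theorem WChain.mono_le {φ : ℝ → ℝ} {r : ℝ} {n : ℕ} {x : ℕ → ℝ} (h : WChain φ r n x)
    {i j : ℕ} (hij : i ≤ j) (hj : j ≤ n) : x i ≤ x j := by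
  rcases eq_or_lt_of_le hij with rfl | h'
  · exact le_rfl
  · exact (h.mono h' hj).le

theorem zero_mem_chainSet (φ : ℝ → ℝ) (r : ℝ) : 0 ∈ chainSet φ r := by
  refine ⟨fun _ => 0, fun i hi => by omega, fun i _ => ?_, fun i hi => by omega⟩
  exact ⟨le_refl 0, zero_le_one⟩

/-- uniform continuity on [0,1] -/
theorem exists_delta {φ : ℝ → ℝ} (hφ : Continuous φ) {r : ℝ} (hr : 0 < r) :
    ∃ δ > 0, ∀ x ∈ Set.Icc (0:ℝ) 1, ∀ y ∈ Set.Icc (0:ℝ) 1, |x - y| < δ → |φ x - φ y| < r := by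
  have hc : UniformContinuousOn φ (Set.Icc (0:ℝ) 1) :=
    (isCompact_Icc).uniformContinuousOn_of_continuous hφ.continuousOn
  rw [Metric.uniformContinuousOn_iff] at hc
  obtain ⟨δ, hδ, h⟩ := hc r hr
  refine ⟨δ, hδ, fun x hx y hy hxy => ?_⟩
  have := h x hx y hy (by rwa [Real.dist_eq])
  rwa [Real.dist_eq] at this

theorem chainSet_bddAbove {φ : ℝ → ℝ} (hφ : Continuous φ) {r : ℝ} (hr : 0 < r) :
    BddAbove (chainSet φ r) := by
  obtain ⟨δ, hδ, h⟩ := exists_delta hφ hr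
  refine ⟨Nat.ceil (1 / δ), fun n hn => ?_⟩
  obtain ⟨x, hx⟩ := hn
  have key : ∀ k ≤ n, x 0 + k * δ ≤ x k := by
    intro k hk
    induction k with
    | zero => simp
    | succ m ih =>
      have hm : x 0 + m * δ ≤ x m := ih (by omega)
      have hstep : x m + δ ≤ x (m + 1) := by
        by_contra hcon
        push_neg at hcon
        have h1 : |x m - x (m+1)| < δ := by
          have := hx.1 m (by omega)
          rw [abs_sub_lt_iff]; constructor <;> nlinarith
        have := h (x m) (hx.2.1 m (by omega)) (x (m+1)) (hx.2.1 (m+1) (by omega)) h1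
        rw [hx.2.2 m (by omega)] at this
        exact absurd this (lt_irrefl r)
      push_cast
      nlinarith
  have h1 : x 0 + n * δ ≤ x n := key n le_rfl
  have h2 : (0:ℝ) ≤ x 0 := (hx.2.1 0 (by omega)).1
  have h3 : x n ≤ 1 := (hx.2.1 n le_rfl).2
  have : (n : ℝ) ≤ 1 / δ := by
    rw [le_div_iff₀ hδ]; nlinarith
  calc n ≤ Nat.ceil ((n : ℝ)) := by simp
    _ ≤ Nat.ceil (1/δ) := Nat.ceil_le_ceil this

theorem chainSet_nonempty (φ : ℝ → ℝ) (r : ℝ) : (chainSet φ r).Nonempty :=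
  ⟨0, zero_mem_chainSet φ r⟩

theorem Mc_mem {φ : ℝ → ℝ} (hφ : Continuous φ) {r : ℝ} (hr : 0 < r) :
    Mc φ r ∈ chainSet φ r :=
  Nat.sSup_mem (chainSet_nonempty φ r) (chainSet_bddAbove hφ hr)

theorem le_Mc {φ : ℝ → ℝ} (hφ : Continuous φ) {r : ℝ} (hr : 0 < r) {n : ℕ}
    (hn : n ∈ chainSet φ r) : n ≤ Mc φ r :=
  le_csSup (chainSet_bddAbove hφ hr) hn

/-- conversion to `Fin` partitions -/
theorem mem_chainSet_iff {φ : ℝ → ℝ} {r : ℝ} {n : ℕ} :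
    n ∈ chainSet φ r ↔ ∃ x : Fin (n + 1) → ℝ, IsPartition n x ∧
      ∀ i : Fin n, |φ (x i.castSucc) - φ (x i.succ)| = r := by
  constructor
  · rintro ⟨x, hx⟩
    refine ⟨fun i => x i.val, ⟨fun i j hij => hx.mono hij (Nat.lt_succ_iff.1 j.isLt), 
      fun i => hx.2.1 i.val (Nat.lt_succ_iff.1 i.isLt)⟩, fun i => ?_⟩
    show |φ (x i.castSucc.val) - φ (x i.succ.val)| = r
    have h1 : (i.castSucc : Fin (n+1)).val = i.val := rfl
    have h2 : (i.succ : Fin (n+1)).val = i.val + 1 := rfl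
    rw [h1, h2]
    exact hx.2.2 i.val i.isLt
  · rintro ⟨x, hpart, hinc⟩
    refine ⟨fun k => x ⟨min k n, by omega⟩, fun i hi => ?_, fun i hi => hpart.2 _, fun i hi => ?_⟩
    · apply hpart.1
      show (⟨min i n, _⟩ : Fin (n+1)) < ⟨min (i+1) n, _⟩
      simp [Fin.lt_def]; omega
    · have h1 : (⟨min i n, by omega⟩ : Fin (n+1)) = (⟨i, hi⟩ : Fin n).castSucc := by
        apply Fin.ext; simp [Fin.castSucc]; omega
      have h2 : (⟨min (i+1) n, by omega⟩ : Fin (n+1)) = (⟨i, hi⟩ : Fin n).succ := by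
        apply Fin.ext; simp [Fin.succ]; omega
      show |φ (x ⟨min i n, by omega⟩) - φ (x ⟨min (i+1) n, by omega⟩)| = r
      rw [h1, h2]
      exact hinc ⟨i, hi⟩

theorem varSum_const {φ : ℝ → ℝ} {r p : ℝ} {n : ℕ} {x : Fin (n+1) → ℝ}
    (hinc : ∀ i : Fin n, |φ (x i.castSucc) - φ (x i.succ)| = r) :
    varSum φ p n x = n * r ^ p := by
  unfold varSum
  rw [Finset.sum_congr rfl (fun i _ => by rw [hinc i])]
  simp [Finset.card_univ]

theorem prVar_eq {φ : ℝ → ℝ} (hφ : Continuous φ) {r : ℝ} (hr : 0 < r) (p : ℝ) :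
    prVar φ p r = ENNReal.ofReal ((Mc φ r : ℝ) * r ^ p) := by
  have hrp : (0:ℝ) ≤ r ^ p := Real.rpow_nonneg hr.le p
  apply le_antisymm
  · refine iSup_le fun n => iSup_le fun x => iSup_le fun hpart => iSup_le fun hinc => ?_
    have hn : n ≤ Mc φ r := le_Mc hφ hr (mem_chainSet_iff.2 ⟨x, hpart, hinc⟩)
    rw [varSum_const hinc]
    apply ENNReal.ofReal_le_ofReal
    apply mul_le_mul_of_nonneg_right _ hrp
    exact_mod_cast hn
  · obtain ⟨x, hpart, hinc⟩ := mem_chainSet_iff.1 (Mc_mem hφ hr (r := r))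
    calc ENNReal.ofReal ((Mc φ r : ℝ) * r ^ p) = ENNReal.ofReal (varSum φ p (Mc φ r) x) := by
          rw [varSum_const hinc]
      _ ≤ prVar φ p r := by
          apply le_iSup_of_le (Mc φ r); apply le_iSup_of_le x
          exact le_iSup_of_le hpart (le_iSup_of_le hinc le_rfl)





/-- If `φ s = ψ (s - b) + C` with `ψ` 1-periodic, chains of `φ` split into at most two
chains of `ψ`. -/
theorem chain_translate {φ ψ : ℝ → ℝ} (hψ : Continuous ψ) {r : ℝ} (hr : 0 < r)
    {b C : ℝ} (hb : b ∈ Set.Icc (0:ℝ) 1) (hψper : ∀ x, ψ (x + 1) = ψ x)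
    (hrel : ∀ s, φ s = ψ (s - b) + C) {n : ℕ} (hn : n ∈ chainSet φ r) :
    n ≤ 2 * Mc ψ r + 1 := by
  classical
  obtain ⟨x, hx⟩ := hn
  have hinc : ∀ i < n, |ψ (x i - b) - ψ (x (i+1) - b)| = r := by
    intro i hi
    have := hx.2.2 i hi
    rw [hrel (x i), hrel (x (i+1))] at this
    simpa using this
  by_cases hex : ∃ i, i ≤ n ∧ b ≤ x i
  · set m := Nat.find hex with hm
    obtain ⟨hmn, hbm⟩ := Nat.find_spec hex
    have hlt : ∀ i < m, x i < b := by
      intro i hi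
      have := Nat.find_min hex hi
      push_neg at this
      exact this (le_trans (le_of_lt (lt_of_lt_of_le hi hmn)) le_rfl)
    -- chain B : indices m..n shifted by -b, length n - m
    have hB : (n - m) ∈ chainSet ψ r := by
      refine ⟨fun j => x (m + j) - b, fun j hj => ?_, fun j hj => ?_, fun j hj => ?_⟩
        <;> dsimp only
      · have := hx.1 (m + j) (by omega)
        have h2 : m + (j+1) = m + j + 1 := by omega
        rw [h2]
        linarith
      · constructor
        · have : b ≤ x (m + j) := le_trans hbm (hx.mono_le (by omega) (by omega))
          linarith
        · have := (hx.2.1 (m+j) (by omega)).2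
          have hb0 := hb.1
          linarith
      · have := hinc (m + j) (by omega)
        have h2 : m + (j+1) = m + j + 1 := by omega
        rw [h2]
        exact this
    -- chain A : indices 0..m-1 shifted by -b+1, length m - 1
    have hA : (m - 1) ∈ chainSet ψ r := by
      rcases Nat.eq_zero_or_pos m with hm0 | hm0
      · rw [hm0]; exact ⟨fun _ => 0, fun i hi => by omega, fun i hi => by
          norm_num, fun i hi => by omega⟩
      refine ⟨fun j => x (min j (m-1)) - b + 1, fun j hj => ?_, fun j hj => ?_, fun j hj => ?_⟩
        <;> dsimp only
      · have h1 : min j (m-1) = j := by omega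
        have h2 : min (j+1) (m-1) = j + 1 := by omega
        rw [h1, h2]
        have := hx.1 j (by omega)
        linarith
      · constructor
        · have := (hx.2.1 (min j (m-1)) (by omega)).1
          have hb1 := hb.2
          linarith
        · have := hlt (min j (m-1)) (by omega)
          linarith
      · have h1 : min j (m-1) = j := by omega
        have h2 : min (j+1) (m-1) = j + 1 := by omega
        rw [h1, h2]
        have h3 : ∀ y : ℝ, ψ (y - b + 1) = ψ (y - b) := fun y => hψper (y - b)
        rw [h3, h3]
        exact hinc j (by omega)
    have h1 := le_Mc hψ hr hA
    have h2 := le_Mc hψ hr hB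
    omega
  · -- all points < b : single shifted chain
    push_neg at hex
    have hall : ∀ i ≤ n, x i < b := fun i hi => hex i hi
    have hA : n ∈ chainSet ψ r := by
      refine ⟨fun j => x (min j n) - b + 1, fun j hj => ?_, fun j hj => ?_, fun j hj => ?_⟩
        <;> dsimp only
      · have h1 : min j n = j := by omega
        have h2 : min (j+1) n = j + 1 := by omega
        rw [h1, h2]
        have := hx.1 j hj
        linarith
      · constructor
        · have := (hx.2.1 (min j n) (by omega)).1
          have hb1 := hb.2
          linarith
        · have := hall (min j n) (by omega)
          linarith
      · have h1 : min j n = j := by omega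
        have h2 : min (j+1) n = j + 1 := by omega
        rw [h1, h2]
        have h3 : ∀ y : ℝ, ψ (y - b + 1) = ψ (y - b) := fun y => hψper (y - b)
        rw [h3, h3]
        exact hinc j hj
    have := le_Mc hψ hr hA
    omega

-- treeDist basics
theorem treeDist_comm (g : ℝ → ℝ) (x y : ℝ) : treeDist g x y = treeDist g y x := by
  unfold treeDist; rw [Set.uIcc_comm]; ring

theorem sInf_image_le {g : ℝ → ℝ} (hg : Continuous g) {x y z : ℝ} (hz : z ∈ Set.uIcc x y) :
    sInf (g '' Set.uIcc x y) ≤ g z := by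
  apply csInf_le _ (Set.mem_image_of_mem g hz)
  exact (isCompact_uIcc.image hg).bddBelow

theorem le_sInf_image {g : ℝ → ℝ} {x y B : ℝ} (h : ∀ z ∈ Set.uIcc x y, B ≤ g z) :
    B ≤ sInf (g '' Set.uIcc x y) := by
  apply le_csInf ((Set.nonempty_uIcc).image g)
  rintro w ⟨z, hz, rfl⟩
  exact h z hz



theorem WChain.drift {φ : ℝ → ℝ} {r : ℝ} {n : ℕ} {x : ℕ → ℝ} (h : WChain φ r n x)
    {k : ℕ} (hk : k ≤ n) : |φ (x k) - φ (x 0)| ≤ k * r := by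
  induction k with
  | zero => simp
  | succ m ih =>
    have h1 := ih (by omega)
    have h2 := h.2.2 m (by omega)
    have h3 : |φ (x (m+1)) - φ (x 0)| ≤ |φ (x m) - φ (x 0)| + |φ (x m) - φ (x (m+1))| := by
      have := abs_sub_abs_le_abs_sub (φ (x (m+1))) (φ (x 0))
      have h4 : φ (x (m+1)) - φ (x 0) = (φ (x m) - φ (x 0)) - (φ (x m) - φ (x (m+1))) := by ring
      rw [h4]
      exact abs_sub (φ (x m) - φ (x 0)) (φ (x m) - φ (x (m+1)))
    push_cast
    rw [h2] at h3
    linarith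

/-- Greedy `ρ`-chain starting at `0` whose steps exhaust all oscillation of size `ρ`. -/
theorem greedy {g : ℝ → ℝ} (hg : Continuous g) {ρ : ℝ} (hρ : 0 < ρ) :
    ∃ n : ℕ, ∃ t : ℕ → ℝ, WChain g ρ n t ∧ t 0 = 0 ∧
      ∀ y ∈ Set.Icc (0:ℝ) 1, ∃ k ≤ n, t k ≤ y ∧ ∀ s ∈ Set.Icc (t k) y, |g s - g (t k)| ≤ ρ := by
  classical
  obtain ⟨δ, hδ, hδδ⟩ := exists_delta hg hρ
  -- strictness from IVT
  have hIVT : ∀ u s : ℝ, u ≤ s → (∀ c ∈ Set.Icc u s, ¬(|g c - g u| = ρ)) →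
      |g s - g u| < ρ := by
    intro u s hus hne
    by_contra hcon
    push_neg at hcon
    have hcont : ContinuousOn (fun c => |g c - g u|) (Set.Icc u s) :=
      ((hg.sub continuous_const).abs).continuousOn
    have hmem : ρ ∈ Set.Icc (|g u - g u| : ℝ) (|g s - g u|) := by
      constructor
      · simp; exact hρ.le
      · exact hcon
    obtain ⟨c, hc, hceq⟩ := intermediate_value_Icc hus hcont hmem
    exact hne c hc hceq
  set nxt : ℝ → ℝ := fun u =>
    if h : ∃ s, s ∈ Set.Icc u 1 ∧ |g s - g u| = ρ then
      sInf {s | s ∈ Set.Icc u 1 ∧ |g s - g u| = ρ} else 2 with hnxt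
  have hP : ∀ u : ℝ, (∃ s, s ∈ Set.Icc u 1 ∧ |g s - g u| = ρ) → u ∈ Set.Icc (0:ℝ) 1 →
      nxt u ∈ Set.Icc u 1 ∧ |g (nxt u) - g u| = ρ ∧
        (∀ s ∈ Set.Ico u (nxt u), ¬(|g s - g u| = ρ)) ∧ u + δ ≤ nxt u := by
    intro u hu hu01
    have hcl : IsClosed {s | s ∈ Set.Icc u 1 ∧ |g s - g u| = ρ} := by
      have hset : {s | s ∈ Set.Icc u 1 ∧ |g s - g u| = ρ} =
          Set.Icc u 1 ∩ (fun s => |g s - g u|) ⁻¹' {ρ} := by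
        ext s; simp [Set.mem_inter_iff]
      rw [hset]
      exact isClosed_Icc.inter (isClosed_singleton.preimage ((hg.sub continuous_const).abs))
    have hbdd : BddBelow {s | s ∈ Set.Icc u 1 ∧ |g s - g u| = ρ} :=
      ⟨u, fun s hs => hs.1.1⟩
    have hmem : nxt u ∈ {s | s ∈ Set.Icc u 1 ∧ |g s - g u| = ρ} := by
      rw [hnxt]; simp only [dif_pos hu]
      exact hcl.csInf_mem hu hbdd
    have hmin : ∀ s ∈ Set.Ico u (nxt u), ¬(|g s - g u| = ρ) := by
      intro s hs hcon
      have : nxt u ≤ s := by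
        rw [hnxt]; simp only [dif_pos hu]
        exact csInf_le hbdd ⟨⟨hs.1, le_trans hs.2.le hmem.1.2⟩, hcon⟩
      exact absurd hs.2 (not_lt.2 this)
    refine ⟨hmem.1, hmem.2, hmin, ?_⟩
    by_contra hcon
    push_neg at hcon
    have h1 : |nxt u - u| < δ := by
      rw [abs_sub_lt_iff]
      constructor
      · linarith
      · linarith [hmem.1.1]
    have h2 : nxt u ∈ Set.Icc (0:ℝ) 1 := ⟨le_trans hu01.1 hmem.1.1, hmem.1.2⟩
    have h3 := hδδ (nxt u) h2 u hu01 h1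
    exact absurd hmem.2 (ne_of_lt h3)
  set t : ℕ → ℝ := fun k => nxt^[k] 0 with ht
  have ht0 : t 0 = 0 := rfl
  have hsucc : ∀ k, t (k+1) = nxt (t k) := fun k => Function.iterate_succ_apply' nxt k 0
  have hterm : ∃ k : ℕ, ¬∃ s, s ∈ Set.Icc (t k) 1 ∧ |g s - g (t k)| = ρ := by
    by_contra hc
    push_neg at hc
    have hc' : ∀ k : ℕ, ∃ s, s ∈ Set.Icc (t k) 1 ∧ |g s - g (t k)| = ρ := by
      intro k
      obtain ⟨s, hs1, hs2⟩ := hc k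
      exact ⟨s, hs1, hs2⟩
    have hind : ∀ k : ℕ, t k ∈ Set.Icc (0:ℝ) 1 ∧ (k:ℝ) * δ ≤ t k := by
      intro k
      induction k with
      | zero => exact ⟨by rw [ht0]; exact ⟨le_rfl, zero_le_one⟩, by simp [ht0]⟩
      | succ m ih =>
        obtain ⟨h1, h2, h3, h4⟩ := hP (t m) (hc' m) ih.1
        rw [hsucc m]
        refine ⟨⟨le_trans ih.1.1 h1.1, h1.2⟩, ?_⟩
        push_cast
        nlinarith [ih.2]
    obtain ⟨K, hK⟩ := exists_nat_gt (1/δ)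
    have h1 := (hind K).1.2
    have h2 := (hind K).2
    have : (K:ℝ) ≤ 1/δ := by
      rw [le_div_iff₀ hδ]; nlinarith
    linarith
  set n := Nat.find hterm with hn
  have hnospec : ¬∃ s, s ∈ Set.Icc (t n) 1 ∧ |g s - g (t n)| = ρ := Nat.find_spec hterm
  have hklt : ∀ k < n, ∃ s, s ∈ Set.Icc (t k) 1 ∧ |g s - g (t k)| = ρ := by
    intro k hk
    have h0 := Nat.find_min hterm hk
    rw [not_not] at h0
    obtain ⟨s, hs1, hs2⟩ := h0
    exact ⟨s, hs1, hs2⟩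
  have hmem01 : ∀ k ≤ n, t k ∈ Set.Icc (0:ℝ) 1 := by
    intro k hk
    induction k with
    | zero => rw [ht0]; exact ⟨le_rfl, zero_le_one⟩
    | succ m ih =>
      have h0 := ih (by omega)
      obtain ⟨h1, _, _, _⟩ := hP (t m) (hklt m (by omega)) h0
      rw [hsucc m]
      exact ⟨le_trans h0.1 h1.1, h1.2⟩
  have hchain : WChain g ρ n t := by
    refine ⟨fun k hk => ?_, fun k hk => hmem01 k hk, fun k hk => ?_⟩
    · obtain ⟨h1, h2, _, h4⟩ := hP (t k) (hklt k hk) (hmem01 k (by omega))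
      rw [hsucc k]
      linarith
    · obtain ⟨h1, h2, _, _⟩ := hP (t k) (hklt k hk) (hmem01 k (by omega))
      rw [hsucc k, abs_sub_comm]
      exact h2
  refine ⟨n, t, hchain, ht0, fun y hy => ?_⟩
  set P : ℕ → Prop := fun k => t k ≤ y with hPdef
  have hP0 : P 0 := by rw [hPdef]; simp only [ht0]; exact hy.1
  set k := Nat.findGreatest P n with hkdef
  have hk_le : k ≤ n := Nat.findGreatest_le n
  have hPk : t k ≤ y := Nat.findGreatest_spec (Nat.zero_le n) hP0
  refine ⟨k, hk_le, hPk, fun s hs => ?_⟩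
  rcases eq_or_lt_of_le hk_le with hkn | hkn
  · -- k = n : no more crossings
    rw [hkn] at hs ⊢
    apply le_of_lt
    apply hIVT (t n) s hs.1
    intro c hc hceq
    exact hnospec ⟨c, ⟨hc.1, le_trans hc.2 (le_trans hs.2 hy.2)⟩, hceq⟩
  · -- k < n
    have hy_lt : y < t (k+1) := by
      by_contra hcon
      push_neg at hcon
      exact Nat.findGreatest_is_greatest (Nat.lt_succ_of_le (le_refl k)) (by omega) hcon
    obtain ⟨h1, h2, h3, _⟩ := hP (t k) (hklt k hkn) (hmem01 k (by omega))
    apply le_of_lt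
    apply hIVT (t k) s hs.1
    intro c hc hceq
    apply h3 c _ hceq
    refine ⟨hc.1, ?_⟩
    calc c ≤ s := hc.2
      _ ≤ y := hs.2
      _ < t (k+1) := hy_lt
      _ = nxt (t k) := hsucc k




/-- any `4ρ`-separated finite set has cardinality at most `Mc g ρ + 1` -/
theorem sep_card_le {g : ℝ → ℝ} (hg : Continuous g) {ρ : ℝ} (hρ : 0 < ρ)
    (S : Finset ℝ) (hS : (S : Set ℝ) ⊆ Set.Icc 0 1)
    (hsep : ∀ x ∈ S, ∀ y ∈ S, x ≠ y → 4 * ρ < treeDist g x y) :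
    S.card ≤ Mc g ρ + 1 := by
  classical
  obtain ⟨n, t, hchain, ht0, hcover⟩ := greedy hg hρ
  set κ : ℝ → ℕ := fun y => if hy : y ∈ Set.Icc (0:ℝ) 1 then
    Classical.choose (hcover y hy) else 0 with hκ
  have hκspec : ∀ y (hy : y ∈ Set.Icc (0:ℝ) 1), κ y ≤ n ∧ t (κ y) ≤ y ∧
      ∀ s ∈ Set.Icc (t (κ y)) y, |g s - g (t (κ y))| ≤ ρ := by
    intro y hy
    rw [hκ]; simp only [dif_pos hy]
    exact Classical.choose_spec (hcover y hy)
  have hinj : Set.InjOn κ (S : Set ℝ) := by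
    have key : ∀ y ∈ (S : Set ℝ), ∀ y' ∈ (S : Set ℝ), y ≤ y' → κ y = κ y' → y = y' := by
      intro y hy y' hy' hle heq
      by_contra hne
      have h4 := hsep y hy y' hy' hne
      obtain ⟨hk1, hk2, hk3⟩ := hκspec y (hS hy)
      obtain ⟨hk1', hk2', hk3'⟩ := hκspec y' (hS hy')
      rw [heq] at hk2 hk3
      set k := κ y'
      have hgy : |g y - g (t k)| ≤ ρ := hk3 y ⟨hk2, le_rfl⟩
      have hgy' : |g y' - g (t k)| ≤ ρ := hk3' y' ⟨hk2', le_rfl⟩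
      have hsInf : g (t k) - ρ ≤ sInf (g '' Set.uIcc y y') := by
        apply le_sInf_image
        intro z hz
        rw [Set.uIcc_of_le hle] at hz
        have : z ∈ Set.Icc (t k) y' := ⟨le_trans hk2 hz.1, hz.2⟩
        have := hk3' z this
        have h5 := abs_le.1 this
        linarith [h5.1]
      have habs1 := (abs_le.1 hgy).2
      have habs2 := (abs_le.1 hgy').2
      have : treeDist g y y' ≤ 4 * ρ := by
        unfold treeDist
        linarith
      linarith
    intro y hy y' hy' heq
    rcases le_total y y' with h | h
    · exact key y hy y' hy' h heq
    · exact (key y' hy' y hy h heq.symm).symm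
  have hmaps : ∀ y ∈ (S : Set ℝ), κ y ∈ Finset.range (n + 1) := by
    intro y hy
    rw [Finset.mem_range]
    exact Nat.lt_succ_of_le (hκspec y (hS hy)).1
  have hcard : S.card ≤ (Finset.range (n + 1)).card := by
    apply Finset.card_le_card_of_injOn κ (fun y hy => hmaps y hy)
    intro y hy y' hy' heq
    exact hinj hy hy' heq
  rw [Finset.card_range] at hcard
  have hn : n ≤ Mc g ρ := le_Mc hg hρ ⟨t, hchain⟩
  omega

/-- oscillation of `g` is captured by `Mc` -/
theorem value_bound {g : ℝ → ℝ} (hg : Continuous g) {ρ : ℝ} (hρ : 0 < ρ)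
    {w : ℝ} (hw : w ∈ Set.Icc (0:ℝ) 1) : |g w - g 0| ≤ ((Mc g ρ : ℝ) + 1) * ρ := by
  obtain ⟨n, t, hchain, ht0, hcover⟩ := greedy hg hρ
  obtain ⟨k, hk, hky, hkcov⟩ := hcover w hw
  have h1 : |g w - g (t k)| ≤ ρ := hkcov w ⟨hky, le_rfl⟩
  have h2 : |g (t k) - g (t 0)| ≤ k * ρ := hchain.drift hk
  have hn : n ≤ Mc g ρ := le_Mc hg hρ ⟨t, hchain⟩
  rw [ht0] at h2
  have h3 : |g w - g 0| ≤ |g w - g (t k)| + |g (t k) - g 0| := by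
    have h4 : g w - g 0 = (g w - g (t k)) + (g (t k) - g 0) := by ring
    rw [h4]; exact abs_add_le _ _
  have h5 : (k:ℝ) ≤ (Mc g ρ : ℝ) := by exact_mod_cast le_trans hk hn
  nlinarith [abs_nonneg (g w - g (t k))]

def nsepSet (g : ℝ → ℝ) (r : ℝ) : Set ℕ :=
  {n | ∃ s : Finset ℝ, (s : Set ℝ) ⊆ Set.Icc 0 1 ∧ s.card = n ∧
    ∀ x ∈ s, ∀ y ∈ s, x ≠ y → r < treeDist g x y}

theorem Nsep_eq_sSup (g : ℝ → ℝ) (r : ℝ) :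
    Nsep (treeDist g) (Set.Icc 0 1) r = sSup (nsepSet g r) := rfl

theorem nsepSet_nonempty (g : ℝ → ℝ) (r : ℝ) : 0 ∈ nsepSet g r :=
  ⟨∅, by simp, by simp, by simp⟩

theorem nsepSet_bddAbove {g : ℝ → ℝ} (hg : Continuous g) {r : ℝ} (hr : 0 < r) :
    BddAbove (nsepSet g r) := by
  refine ⟨Mc g (r/4) + 1, fun n hn => ?_⟩
  obtain ⟨S, hS1, hS2, hS3⟩ := hn
  rw [← hS2]
  apply sep_card_le hg (by linarith : (0:ℝ) < r/4) S hS1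
  intro x hx y hy hxy
  have := hS3 x hx y hy hxy
  linarith

theorem Nsep_le_Mc {g : ℝ → ℝ} (hg : Continuous g) {r : ℝ} (hr : 0 < r) :
    Nsep (treeDist g) (Set.Icc 0 1) r ≤ Mc g (r/4) + 1 := by
  rw [Nsep_eq_sSup]
  apply csSup_le ⟨0, nsepSet_nonempty g r⟩
  intro n hn
  obtain ⟨S, hS1, hS2, hS3⟩ := hn
  rw [← hS2]
  apply sep_card_le hg (by linarith : (0:ℝ) < r/4) S hS1
  intro x hx y hy hxy
  have := hS3 x hx y hy hxy
  linarith

theorem card_le_Nsep {g : ℝ → ℝ} (hg : Continuous g) {r : ℝ} (hr : 0 < r)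
    {S : Finset ℝ} (hS1 : (S : Set ℝ) ⊆ Set.Icc 0 1)
    (hS3 : ∀ x ∈ S, ∀ y ∈ S, x ≠ y → r < treeDist g x y) :
    S.card ≤ Nsep (treeDist g) (Set.Icc 0 1) r := by
  rw [Nsep_eq_sSup]
  exact le_csSup (nsepSet_bddAbove hg hr) ⟨S, hS1, rfl, hS3⟩

/-- The walk/branch-counting argument: `Mc g ρ ≤ 2 N(ρ/2)`. -/
theorem Mc_le_two_Nsep {g : ℝ → ℝ} (hg : Continuous g) {ρ : ℝ} (hρ : 0 < ρ) :
    Mc g ρ ≤ 2 * Nsep (treeDist g) (Set.Icc 0 1) (ρ/2) := by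
  classical
  obtain ⟨x, hx⟩ := Mc_mem hg hρ
  set n := Mc g ρ with hn
  set W : ℕ → ℤ := fun l =>
    Nat.rec (0:ℤ) (fun m Wm => Wm + if g (x (m+1)) = g (x m) + ρ then 1 else -1) l with hW
  have hW0 : W 0 = 0 := rfl
  have hWsucc : ∀ m, W (m+1) = W m + (if g (x (m+1)) = g (x m) + ρ then 1 else -1) :=
    fun m => rfl
  have hud : ∀ m < n, g (x (m+1)) = g (x m) + ρ ∨ g (x (m+1)) = g (x m) - ρ := by
    intro m hm
    rcases abs_eq hρ.le |>.1 (hx.2.2 m hm) with h | h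
    · right; linarith
    · left; linarith
  have hval : ∀ l ≤ n, g (x l) = g (x 0) + ρ * (W l : ℝ) := by
    intro l hl
    induction l with
    | zero => simp [hW0]
    | succ m ih =>
      have ih' := ih (by omega)
      rcases hud m (by omega) with h | h
      · rw [hWsucc m, if_pos h]
        push_cast
        rw [h, ih']; ring
      · have hne : ¬(g (x (m+1)) = g (x m) + ρ) := by
          intro hcon; rw [hcon] at h; linarith
        rw [hWsucc m, if_neg hne]
        push_cast
        rw [h, ih']; ring
  -- up and down step index sets
  set U := (Finset.range n).filter (fun i => g (x (i+1)) = g (x i) + ρ) with hU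
  set D := (Finset.range n).filter (fun i => ¬(g (x (i+1)) = g (x i) + ρ)) with hD
  have hUD : U.card + D.card = n := by
    rw [hU, hD, Finset.card_filter_add_card_filter_not, Finset.card_range]
  -- separation of up-step tops
  have claim_up : ∀ i ∈ U, ∀ j ∈ U, i < j → ρ ≤ treeDist g (x (i+1)) (x (j+1)) := by
    intro i hi j hj hij
    rw [hU, Finset.mem_filter, Finset.mem_range] at hi hj
    obtain ⟨l, hlF, hlmin⟩ := Finset.exists_min_image (Finset.Icc (i+1) (j+1)) W
      ⟨i+1, Finset.mem_Icc.2 ⟨le_rfl, by omega⟩⟩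
    rw [Finset.mem_Icc] at hlF
    have hxle : x (i+1) ≤ x (j+1) := hx.mono_le (by omega) (by omega)
    have hxl_mem : x l ∈ Set.uIcc (x (i+1)) (x (j+1)) := by
      rw [Set.uIcc_of_le hxle]
      exact ⟨hx.mono_le hlF.1 (by omega), hx.mono_le hlF.2 (by omega)⟩
    have hsinf := sInf_image_le hg hxl_mem
    have hv1 := hval (i+1) (by omega)
    have hv2 := hval (j+1) (by omega)
    have hvl := hval l (by omega)
    have hbound : (1:ℤ) ≤ W (i+1) + W (j+1) - 2 * W l := by
      have h1 : W l ≤ W (i+1) := hlmin (i+1) (Finset.mem_Icc.2 ⟨le_rfl, by omega⟩)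
      have h2 : W l ≤ W j := hlmin j (Finset.mem_Icc.2 ⟨by omega, by omega⟩)
      have h3 : W (j+1) = W j + 1 := by rw [hWsucc j, if_pos hj.2]
      omega
    have hbr : (1:ℝ) ≤ (W (i+1) : ℝ) + (W (j+1) : ℝ) - 2 * (W l : ℝ) := by exact_mod_cast hbound
    unfold treeDist
    rw [hv1, hv2]
    have : g (x l) = g (x 0) + ρ * (W l : ℝ) := hvl
    nlinarith [hsinf, this]
  have claim_dn : ∀ i ∈ D, ∀ j ∈ D, i < j → ρ ≤ treeDist g (x i) (x j) := by
    intro i hi j hj hij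
    rw [hD, Finset.mem_filter, Finset.mem_range] at hi hj
    obtain ⟨l, hlF, hlmin⟩ := Finset.exists_min_image (Finset.Icc i j) W
      ⟨i, Finset.mem_Icc.2 ⟨le_rfl, by omega⟩⟩
    rw [Finset.mem_Icc] at hlF
    have hxle : x i ≤ x j := hx.mono_le (by omega) (by omega)
    have hxl_mem : x l ∈ Set.uIcc (x i) (x j) := by
      rw [Set.uIcc_of_le hxle]
      exact ⟨hx.mono_le hlF.1 (by omega), hx.mono_le hlF.2 (by omega)⟩
    have hsinf := sInf_image_le hg hxl_mem
    have hv1 := hval i (by omega)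
    have hv2 := hval j (by omega)
    have hvl := hval l (by omega)
    have hbound : (1:ℤ) ≤ W i + W j - 2 * W l := by
      have h1 : W l ≤ W j := hlmin j (Finset.mem_Icc.2 ⟨by omega, le_rfl⟩)
      have h2 : W l ≤ W (i+1) := hlmin (i+1) (Finset.mem_Icc.2 ⟨by omega, by omega⟩)
      have h3 : W (i+1) = W i - 1 := by rw [hWsucc i, if_neg hi.2]; ring
      omega
    have hbr : (1:ℝ) ≤ (W i : ℝ) + (W j : ℝ) - 2 * (W l : ℝ) := by exact_mod_cast hbound
    unfold treeDist
    rw [hv1, hv2]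
    nlinarith [hsinf, hvl]
  have hρ2 : (0:ℝ) < ρ/2 := by linarith
  rcases le_total D.card U.card with hc | hc
  · -- use up-tops
    set S := U.image (fun i => x (i+1)) with hSdef
    have hinj : Set.InjOn (fun i => x (i+1)) (U : Set ℕ) := by
      intro i hi j hj heq
      by_contra hne
      rcases Nat.lt_or_ge i j with h | h
      · have hj' := (Finset.mem_filter.1 hj).1
        rw [Finset.mem_range] at hj'
        have := hx.mono (show i+1 < j+1 by omega) (by omega)
        simp only at heq
        linarith [this, heq.le, heq.ge]
      · have h' : j < i := by omega
        have hi' := (Finset.mem_filter.1 hi).1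
        rw [Finset.mem_range] at hi'
        have := hx.mono (show j+1 < i+1 by omega) (by omega)
        simp only at heq
        linarith [this, heq.le, heq.ge]
    have hScard : S.card = U.card := Finset.card_image_of_injOn hinj
    have hSsub : (S : Set ℝ) ⊆ Set.Icc 0 1 := by
      intro u hu
      simp only [hSdef, Finset.coe_image, Set.mem_image] at hu
      obtain ⟨i, hi, rfl⟩ := hu
      have hi' := (Finset.mem_filter.1 hi).1
      rw [Finset.mem_range] at hi'
      exact hx.2.1 (i+1) (by omega)
    have hSsep : ∀ u ∈ S, ∀ v ∈ S, u ≠ v → ρ/2 < treeDist g u v := by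
      intro u hu v hv huv
      rw [hSdef, Finset.mem_image] at hu hv
      obtain ⟨i, hi, rfl⟩ := hu
      obtain ⟨j, hj, rfl⟩ := hv
      have hij : i ≠ j := fun h => huv (by rw [h])
      rcases Nat.lt_or_ge i j with h | h
      · have := claim_up i hi j hj h; linarith
      · have := claim_up j hj i hi (by omega)
        rw [treeDist_comm] at this; linarith
    have := card_le_Nsep hg hρ2 hSsub hSsep
    omega
  · -- use down-bottoms
    set S := D.image (fun i => x i) with hSdef
    have hinj : Set.InjOn (fun i => x i) (D : Set ℕ) := by
      intro i hi j hj heq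
      by_contra hne
      rcases Nat.lt_or_ge i j with h | h
      · have hj' := (Finset.mem_filter.1 hj).1
        rw [Finset.mem_range] at hj'
        have := hx.mono h (by omega)
        simp only at heq
        linarith [this, heq.le, heq.ge]
      · have h' : j < i := by omega
        have hi' := (Finset.mem_filter.1 hi).1
        rw [Finset.mem_range] at hi'
        have := hx.mono h' (by omega)
        simp only at heq
        linarith [this, heq.le, heq.ge]
    have hScard : S.card = D.card := Finset.card_image_of_injOn hinj
    have hSsub : (S : Set ℝ) ⊆ Set.Icc 0 1 := by
      intro u hu
      simp only [hSdef, Finset.coe_image, Set.mem_image] at hu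
      obtain ⟨i, hi, rfl⟩ := hu
      have hi' := (Finset.mem_filter.1 hi).1
      rw [Finset.mem_range] at hi'
      exact hx.2.1 i (by omega)
    have hSsep : ∀ u ∈ S, ∀ v ∈ S, u ≠ v → ρ/2 < treeDist g u v := by
      intro u hu v hv huv
      rw [hSdef, Finset.mem_image] at hu hv
      obtain ⟨i, hi, rfl⟩ := hu
      obtain ⟨j, hj, rfl⟩ := hv
      have hij : i ≠ j := fun h => huv (by rw [h])
      rcases Nat.lt_or_ge i j with h | h
      · have := claim_dn i hi j hj h; linarith
      · have := claim_dn j hj i hi (by omega)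
        rw [treeDist_comm] at this; linarith
    have := card_le_Nsep hg hρ2 hSsub hSsep
    omega


theorem map_scale {c : ℝ} (hc : 0 < c) :
    Filter.map (fun r : ℝ => c * r) (𝓝[>] (0:ℝ)) = 𝓝[>] (0:ℝ) := by
  rw [show (fun r : ℝ => c * r) = (Homeomorph.mulLeft₀ c hc.ne') from rfl]
  rw [(Homeomorph.mulLeft₀ c hc.ne').isEmbedding.map_nhdsWithin_eq]
  have himg : (Homeomorph.mulLeft₀ c hc.ne') '' (Ioi 0) = Ioi 0 := by
    ext y; simp [Homeomorph.coe_mulLeft₀]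
    constructor
    · rintro ⟨x, hx, rfl⟩; positivity
    · intro hy; exact ⟨y / c, by positivity, by field_simp⟩
  rw [himg]
  norm_num [Homeomorph.coe_mulLeft₀]

theorem eq_top_of_nat_le {x : ℝ≥0∞} (h : ∀ K : ℕ, (K : ℝ≥0∞) ≤ x) : x = ⊤ := by
  by_contra hx
  obtain ⟨K, hK⟩ := ENNReal.exists_nat_gt hx
  exact absurd (h K) (not_le.2 hK)

theorem eventually_Ioo : ∀ᶠ r in 𝓝[>] (0:ℝ), r ∈ Set.Ioo (0:ℝ) 1 :=
  Ioo_mem_nhdsGT one_pos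

/-- the tendsto fact : `exp ((p-q) log r) → ∞` as `r → 0+` when `p < q`. -/
theorem tendsto_exp_factor {p q : ℝ} (hpq : p < q) :
    Tendsto (fun r : ℝ => Real.exp ((p - q) * Real.log r)) (𝓝[>] (0:ℝ)) atTop := by
  apply Real.tendsto_exp_atTop.comp
  have h1 : Tendsto Real.log (𝓝[>] (0:ℝ)) atBot := Real.tendsto_log_nhdsGT_zero
  exact Tendsto.const_mul_atBot_of_neg (by linarith) h1

def uexp (F : ℝ → ℕ) : ℝ → ℝ≥0∞ :=
  fun r => ENNReal.ofReal (Real.log (F r : ℝ) / (-Real.log r))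

/-- pointwise: if `u F r > ofReal q` and `0 < r < 1` then `F r * r^p ≥ exp((p-q) log r)`. -/
theorem pointwise_lower {F : ℝ → ℕ} {q p r : ℝ} (hq : 0 ≤ q) (hr : r ∈ Set.Ioo (0:ℝ) 1)
    (h : ENNReal.ofReal q < uexp F r) :
    Real.exp ((p - q) * Real.log r) ≤ (F r : ℝ) * r ^ p := by
  have hlr : Real.log r < 0 := Real.log_neg hr.1 hr.2
  have hnl : 0 < -Real.log r := by linarith
  have hlt : q < Real.log (F r : ℝ) / (-Real.log r) := by
    by_contra hcon
    push_neg at hcon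
    exact absurd (ENNReal.ofReal_le_ofReal hcon) (not_le.2 h)
  have hlog : q * (-Real.log r) < Real.log (F r : ℝ) := by
    rw [div_eq_mul_inv] at hlt
    calc q * (-Real.log r) < (Real.log (F r : ℝ) * (-Real.log r)⁻¹) * (-Real.log r) := by
          apply mul_lt_mul_of_pos_right hlt hnl
      _ = Real.log (F r : ℝ) := inv_mul_cancel_right₀ hnl.ne' _
  have hFpos : (0:ℝ) < (F r : ℝ) := by
    by_contra hcon
    push_neg at hcon
    have : (F r : ℝ) = 0 := le_antisymm hcon (Nat.cast_nonneg _)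
    rw [this, Real.log_zero] at hlog
    nlinarith
  have h1 : (F r : ℝ) * r ^ p = Real.exp (Real.log (F r : ℝ) + p * Real.log r) := by
    rw [Real.exp_add, Real.exp_log hFpos, Real.rpow_def_of_pos hr.1, mul_comm (Real.log r) p]
  rw [h1]
  apply Real.exp_le_exp.2
  nlinarith
/-- pointwise: if `u F r < ofReal q` with `0 < q < p`, `0 < r < 1`, then `F r * r^p ≤ 1`. -/
theorem pointwise_upper {F : ℝ → ℕ} {q p r : ℝ} (hq : 0 < q) (hqp : q < p)
    (hr : r ∈ Set.Ioo (0:ℝ) 1) (h : uexp F r < ENNReal.ofReal q) :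
    (F r : ℝ) * r ^ p ≤ 1 := by
  have hlr : Real.log r < 0 := Real.log_neg hr.1 hr.2
  have hnl : 0 < -Real.log r := by linarith
  rcases Nat.eq_zero_or_pos (F r) with h0 | h0
  · rw [h0]
    simp
  have hFpos : (0:ℝ) < (F r : ℝ) := by exact_mod_cast h0
  have hlt : Real.log (F r : ℝ) / (-Real.log r) < q := by
    rw [uexp] at h
    by_contra hcon
    push_neg at hcon
    exact absurd (ENNReal.ofReal_le_ofReal hcon) (not_le.2 h)
  have hlog : Real.log (F r : ℝ) < q * (-Real.log r) := by
    rw [div_lt_iff₀ hnl] at hlt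
    linarith [hlt]
  have h1 : (F r : ℝ) * r ^ p = Real.exp (Real.log (F r : ℝ) + p * Real.log r) := by
    rw [Real.exp_add, Real.exp_log hFpos, Real.rpow_def_of_pos hr.1, mul_comm (Real.log r) p]
  rw [h1, show (1:ℝ) = Real.exp 0 from (Real.exp_zero).symm]
  apply Real.exp_le_exp.2
  nlinarith

theorem crit_lt_limsup {F : ℝ → ℕ} {p : ℝ} (hp : 0 ≤ p)
    (h : ENNReal.ofReal p < limsup (uexp F) (𝓝[>] (0:ℝ))) :
    limsup (fun r => ENNReal.ofReal ((F r : ℝ) * r ^ p)) (𝓝[>] (0:ℝ)) = ⊤ := by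
  -- choose q with p < q and ofReal q < limsup
  obtain ⟨d, hd1, hd2⟩ := exists_between h
  have hdne : d ≠ ⊤ := ne_top_of_lt hd2
  set q := d.toReal with hqdef
  have hq0 : 0 ≤ q := ENNReal.toReal_nonneg
  have hpq : p < q := by
    have := (ENNReal.ofReal_lt_iff_lt_toReal hp hdne).1 hd1
    exact this
  have hfreq : ∃ᶠ r in 𝓝[>] (0:ℝ), ENNReal.ofReal q < uexp F r := by
    exact Filter.frequently_lt_of_lt_limsup (by isBoundedDefault)
      (by rwa [hqdef, ENNReal.ofReal_toReal hdne])
  apply eq_top_of_nat_le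
  intro K
  have hev : ∀ᶠ r in 𝓝[>] (0:ℝ),
      (K : ℝ) ≤ Real.exp ((p - q) * Real.log r) := (tendsto_exp_factor hpq).eventually_ge_atTop K
  have hcomb := (hfreq.and_eventually (hev.and eventually_Ioo))
  have : ∃ᶠ r in 𝓝[>] (0:ℝ), (K : ℝ≥0∞) ≤ ENNReal.ofReal ((F r : ℝ) * r ^ p) := by
    apply hcomb.mono
    rintro r ⟨h1, h2, h3⟩
    have := le_trans h2 (pointwise_lower hq0 h3 h1)
    rw [← ENNReal.ofReal_natCast K]
    exact ENNReal.ofReal_le_ofReal this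
  exact le_limsup_of_frequently_le this

theorem crit_gt_limsup {F : ℝ → ℕ} {p : ℝ} (hp : 0 < p)
    (h : limsup (uexp F) (𝓝[>] (0:ℝ)) < ENNReal.ofReal p) :
    limsup (fun r => ENNReal.ofReal ((F r : ℝ) * r ^ p)) (𝓝[>] (0:ℝ)) ≠ ⊤ := by
  set L := limsup (uexp F) (𝓝[>] (0:ℝ)) with hL
  have hLne : L ≠ ⊤ := ne_top_of_lt h
  set q := (L.toReal + p) / 2 with hqdef
  have hLp : L.toReal < p := by
    rw [← ENNReal.lt_ofReal_iff_toReal_lt hLne]; exact h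
  have hq0 : 0 < q := by
    have := ENNReal.toReal_nonneg (a := L)
    rw [hqdef]; linarith
  have hqp : q < p := by rw [hqdef]; linarith
  have hLq : L < ENNReal.ofReal q := by
    rw [ENNReal.lt_ofReal_iff_toReal_lt hLne, hqdef]; linarith
  have hev : ∀ᶠ r in 𝓝[>] (0:ℝ), uexp F r < ENNReal.ofReal q :=
    Filter.eventually_lt_of_limsup_lt hLq
  have hb : ∀ᶠ r in 𝓝[>] (0:ℝ), ENNReal.ofReal ((F r : ℝ) * r ^ p) ≤ ENNReal.ofReal 1 := by
    filter_upwards [hev, eventually_Ioo] with r h1 h2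
    exact ENNReal.ofReal_le_ofReal (pointwise_upper hq0 hqp h2 h1)
  have := Filter.limsup_le_of_le (by isBoundedDefault) hb
  intro hcon
  rw [hcon] at this
  exact absurd this (by simp)

theorem crit_lt_liminf {F : ℝ → ℕ} {p : ℝ} (hp : 0 ≤ p)
    (h : ENNReal.ofReal p < liminf (uexp F) (𝓝[>] (0:ℝ))) :
    liminf (fun r => ENNReal.ofReal ((F r : ℝ) * r ^ p)) (𝓝[>] (0:ℝ)) = ⊤ := by
  obtain ⟨d, hd1, hd2⟩ := exists_between h
  have hdne : d ≠ ⊤ := ne_top_of_lt hd2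
  set q := d.toReal with hqdef
  have hq0 : 0 ≤ q := ENNReal.toReal_nonneg
  have hpq : p < q := (ENNReal.ofReal_lt_iff_lt_toReal hp hdne).1 hd1
  have hevq : ∀ᶠ r in 𝓝[>] (0:ℝ), ENNReal.ofReal q < uexp F r := by
    exact Filter.eventually_lt_of_lt_liminf
      (by rwa [hqdef, ENNReal.ofReal_toReal hdne]) (by isBoundedDefault)
  apply eq_top_of_nat_le
  intro K
  have hev : ∀ᶠ r in 𝓝[>] (0:ℝ),
      (K : ℝ) ≤ Real.exp ((p - q) * Real.log r) := (tendsto_exp_factor hpq).eventually_ge_atTop K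
  apply le_liminf_of_le (by isBoundedDefault)
  filter_upwards [hevq, hev, eventually_Ioo] with r h1 h2 h3
  have := le_trans h2 (pointwise_lower hq0 h3 h1)
  rw [← ENNReal.ofReal_natCast K]
  exact ENNReal.ofReal_le_ofReal this

theorem crit_gt_liminf {F : ℝ → ℕ} {p : ℝ} (hp : 0 < p)
    (h : liminf (uexp F) (𝓝[>] (0:ℝ)) < ENNReal.ofReal p) :
    liminf (fun r => ENNReal.ofReal ((F r : ℝ) * r ^ p)) (𝓝[>] (0:ℝ)) ≠ ⊤ := by
  set L := liminf (uexp F) (𝓝[>] (0:ℝ)) with hL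
  have hLne : L ≠ ⊤ := ne_top_of_lt h
  set q := (L.toReal + p) / 2 with hqdef
  have hLp : L.toReal < p := by
    rw [← ENNReal.lt_ofReal_iff_toReal_lt hLne]; exact h
  have hq0 : 0 < q := by
    have := ENNReal.toReal_nonneg (a := L)
    rw [hqdef]; linarith
  have hqp : q < p := by rw [hqdef]; linarith
  have hLq : L < ENNReal.ofReal q := by
    rw [ENNReal.lt_ofReal_iff_toReal_lt hLne, hqdef]; linarith
  have hfr : ∃ᶠ r in 𝓝[>] (0:ℝ), uexp F r < ENNReal.ofReal q :=
    Filter.frequently_lt_of_liminf_lt (by isBoundedDefault) hLq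
  have hb : ∃ᶠ r in 𝓝[>] (0:ℝ), ENNReal.ofReal ((F r : ℝ) * r ^ p) ≤ ENNReal.ofReal 1 := by
    apply (hfr.and_eventually eventually_Ioo).mono
    rintro r ⟨h1, h2⟩
    exact ENNReal.ofReal_le_ofReal (pointwise_upper hq0 hqp h2 h1)
  have := Filter.liminf_le_of_frequently_le hb
  intro hcon
  rw [hcon] at this
  exact absurd this (by simp)

/-- the counting function of the tree grows at least like `c/r`, so dim ≥ 1 -/
theorem one_le_liminf_uexp {F : ℝ → ℕ} {c : ℝ} (hc : 0 < c)
    (h : ∀ᶠ r in 𝓝[>] (0:ℝ), c / r ≤ (F r : ℝ)) :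
    1 ≤ liminf (uexp F) (𝓝[>] (0:ℝ)) := by
  set v : ℝ → ℝ≥0∞ := fun r =>
    ENNReal.ofReal ((Real.log c - Real.log r) / (-Real.log r)) with hv
  have hle : ∀ᶠ r in 𝓝[>] (0:ℝ), v r ≤ uexp F r := by
    filter_upwards [h, eventually_Ioo] with r h1 h2
    have hlr : Real.log r < 0 := Real.log_neg h2.1 h2.2
    have hnl : 0 < -Real.log r := by linarith
    have hcr : (0:ℝ) < c / r := div_pos hc h2.1
    have hFpos : (0:ℝ) < (F r : ℝ) := lt_of_lt_of_le hcr h1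
    have hlog : Real.log (c / r) ≤ Real.log (F r : ℝ) := Real.log_le_log hcr h1
    rw [Real.log_div hc.ne' h2.1.ne'] at hlog
    apply ENNReal.ofReal_le_ofReal
    exact div_le_div_of_nonneg_right hlog hnl.le
  have h1 : liminf v (𝓝[>] (0:ℝ)) ≤ liminf (uexp F) (𝓝[>] (0:ℝ)) :=
    liminf_le_liminf hle
  have h2 : Tendsto v (𝓝[>] (0:ℝ)) (𝓝 1) := by
    have h3 : Tendsto (fun r : ℝ => (Real.log c - Real.log r) / (-Real.log r))
        (𝓝[>] (0:ℝ)) (𝓝 1) := by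
      have h4 : Tendsto (fun r : ℝ => -Real.log r) (𝓝[>] (0:ℝ)) atTop := by
        exact tendsto_neg_atBot_atTop.comp Real.tendsto_log_nhdsGT_zero
      have h5 : Tendsto (fun r : ℝ => Real.log c / (-Real.log r) + 1) (𝓝[>] (0:ℝ)) (𝓝 1) := by
        have := Filter.Tendsto.div_atTop (tendsto_const_nhds (x := Real.log c)) h4
        have h6 := this.add (tendsto_const_nhds (x := (1:ℝ)))
        simpa using h6
      apply h5.congr'
      filter_upwards [eventually_Ioo] with r hr
      have hlr : Real.log r < 0 := Real.log_neg hr.1 hr.2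
      have hne : -Real.log r ≠ 0 := by intro hcon; rw [neg_eq_zero] at hcon; linarith
      show Real.log c / -Real.log r + 1 = (Real.log c - Real.log r) / -Real.log r
      rw [eq_div_iff hne, add_mul, one_mul, div_mul_cancel₀ _ hne]
      ring
    have h7 := (ENNReal.continuous_ofReal.tendsto 1).comp h3
    rw [show ENNReal.ofReal 1 = 1 by simp] at h7
    exact h7
  rw [← h2.liminf_eq] at *
  exact h1



theorem pointwise_cmp {F₁ F₂ : ℝ → ℕ} {c C₁ C₂ p r : ℝ} (hc : 0 < c) (hC₁ : 0 ≤ C₁)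
    (hC₂ : 0 ≤ C₂) (hp : 0 ≤ p) (hcmp : (F₁ r : ℝ) ≤ C₁ * (F₂ (c * r) : ℝ) + C₂)
    (hr : r ∈ Set.Ioo (0:ℝ) 1) {L : ℝ≥0∞}
    (h1 : ENNReal.ofReal ((F₂ (c * r) : ℝ) * (c * r) ^ p) < L) :
    ENNReal.ofReal ((F₁ r : ℝ) * r ^ p) ≤ ENNReal.ofReal (C₁ / c ^ p) * L +
      ENNReal.ofReal C₂ := by
  have hrp : (0:ℝ) ≤ r ^ p := Real.rpow_nonneg hr.1.le p
  have hcp : (0:ℝ) < c ^ p := Real.rpow_pos_of_pos hc p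
  have hcr : (c * r) ^ p = c ^ p * r ^ p := Real.mul_rpow hc.le hr.1.le
  have hr1 : r ^ p ≤ 1 := Real.rpow_le_one hr.1.le hr.2.le hp
  have key : (F₁ r : ℝ) * r ^ p ≤ (C₁ / c ^ p) * ((F₂ (c * r) : ℝ) * (c * r) ^ p) + C₂ := by
    have h2 : (F₁ r : ℝ) * r ^ p ≤ (C₁ * (F₂ (c * r) : ℝ) + C₂) * r ^ p :=
      mul_le_mul_of_nonneg_right hcmp hrp
    have h3 : (C₁ / c ^ p) * ((F₂ (c * r) : ℝ) * (c * r) ^ p) =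
        C₁ * (F₂ (c * r) : ℝ) * r ^ p := by
      rw [hcr]; field_simp
    have h4 : C₂ * r ^ p ≤ C₂ := mul_le_of_le_one_right hC₂ hr1
    have h5 : (0:ℝ) ≤ (F₂ (c * r) : ℝ) := Nat.cast_nonneg _
    nlinarith [h5, hrp]
  calc ENNReal.ofReal ((F₁ r : ℝ) * r ^ p)
      ≤ ENNReal.ofReal ((C₁ / c ^ p) * ((F₂ (c * r) : ℝ) * (c * r) ^ p) + C₂) :=
        ENNReal.ofReal_le_ofReal key
    _ ≤ ENNReal.ofReal ((C₁ / c ^ p) * ((F₂ (c * r) : ℝ) * (c * r) ^ p)) +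
        ENNReal.ofReal C₂ := ENNReal.ofReal_add_le
    _ = ENNReal.ofReal (C₁ / c ^ p) * ENNReal.ofReal ((F₂ (c * r) : ℝ) * (c * r) ^ p) +
        ENNReal.ofReal C₂ := by rw [ENNReal.ofReal_mul (div_nonneg hC₁ hcp.le)]
    _ ≤ ENNReal.ofReal (C₁ / c ^ p) * L + ENNReal.ofReal C₂ := by
        exact add_le_add_left (mul_le_mul_right h1.le _) _

theorem transfer_limsup_top {F₁ F₂ : ℝ → ℕ} {c C₁ C₂ : ℝ} (hc : 0 < c) (hC₁ : 0 ≤ C₁)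
    (hC₂ : 0 ≤ C₂) {p : ℝ} (hp : 0 ≤ p)
    (hcmp : ∀ r : ℝ, 0 < r → (F₁ r : ℝ) ≤ C₁ * (F₂ (c * r) : ℝ) + C₂)
    (htop : limsup (fun r => ENNReal.ofReal ((F₁ r : ℝ) * r ^ p)) (𝓝[>] (0:ℝ)) = ⊤) :
    limsup (fun r => ENNReal.ofReal ((F₂ r : ℝ) * r ^ p)) (𝓝[>] (0:ℝ)) = ⊤ := by
  by_contra h
  set L := limsup (fun r => ENNReal.ofReal ((F₂ r : ℝ) * r ^ p)) (𝓝[>] (0:ℝ)) with hLdef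
  have hLL : L < L + 1 := ENNReal.lt_add_right h one_ne_zero
  have hev : ∀ᶠ s in 𝓝[>] (0:ℝ), ENNReal.ofReal ((F₂ s : ℝ) * s ^ p) < L + 1 :=
    Filter.eventually_lt_of_limsup_lt hLL
  have hev2 : ∀ᶠ r in 𝓝[>] (0:ℝ),
      ENNReal.ofReal ((F₂ (c * r) : ℝ) * (c * r) ^ p) < L + 1 := by
    rw [← map_scale hc] at hev
    exact Filter.eventually_map.1 hev
  set K := ENNReal.ofReal (C₁ / c ^ p) * (L + 1) + ENNReal.ofReal C₂ with hK
  have hb : ∀ᶠ r in 𝓝[>] (0:ℝ), ENNReal.ofReal ((F₁ r : ℝ) * r ^ p) ≤ K := by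
    filter_upwards [hev2, eventually_Ioo] with r h1 h2
    exact pointwise_cmp hc hC₁ hC₂ hp (hcmp r h2.1) h2 h1
  have hle := Filter.limsup_le_of_le (by isBoundedDefault) hb
  rw [htop] at hle
  have hKtop : K < ⊤ := by
    rw [hK]
    apply ENNReal.add_lt_top.2
    constructor
    · exact ENNReal.mul_lt_top ENNReal.ofReal_lt_top
        (ENNReal.add_lt_top.2 ⟨lt_top_iff_ne_top.2 h, ENNReal.one_lt_top⟩)
    · exact ENNReal.ofReal_lt_top
  exact absurd hle (not_le.2 hKtop)

theorem transfer_liminf_top {F₁ F₂ : ℝ → ℕ} {c C₁ C₂ : ℝ} (hc : 0 < c) (hC₁ : 0 ≤ C₁)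
    (hC₂ : 0 ≤ C₂) {p : ℝ} (hp : 0 ≤ p)
    (hcmp : ∀ r : ℝ, 0 < r → (F₁ r : ℝ) ≤ C₁ * (F₂ (c * r) : ℝ) + C₂)
    (htop : liminf (fun r => ENNReal.ofReal ((F₁ r : ℝ) * r ^ p)) (𝓝[>] (0:ℝ)) = ⊤) :
    liminf (fun r => ENNReal.ofReal ((F₂ r : ℝ) * r ^ p)) (𝓝[>] (0:ℝ)) = ⊤ := by
  by_contra h
  set L := liminf (fun r => ENNReal.ofReal ((F₂ r : ℝ) * r ^ p)) (𝓝[>] (0:ℝ)) with hLdef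
  have hLL : L < L + 1 := ENNReal.lt_add_right h one_ne_zero
  have hfr : ∃ᶠ s in 𝓝[>] (0:ℝ), ENNReal.ofReal ((F₂ s : ℝ) * s ^ p) < L + 1 :=
    Filter.frequently_lt_of_liminf_lt (by isBoundedDefault) hLL
  have hfr2 : ∃ᶠ r in 𝓝[>] (0:ℝ),
      ENNReal.ofReal ((F₂ (c * r) : ℝ) * (c * r) ^ p) < L + 1 := by
    rw [← map_scale hc] at hfr
    exact Filter.frequently_map.1 hfr
  set K := ENNReal.ofReal (C₁ / c ^ p) * (L + 1) + ENNReal.ofReal C₂ with hK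
  have hb : ∃ᶠ r in 𝓝[>] (0:ℝ), ENNReal.ofReal ((F₁ r : ℝ) * r ^ p) ≤ K := by
    apply (hfr2.and_eventually eventually_Ioo).mono
    rintro r ⟨h1, h2⟩
    exact pointwise_cmp hc hC₁ hC₂ hp (hcmp r h2.1) h2 h1
  have hle := Filter.liminf_le_of_frequently_le hb
  rw [htop] at hle
  have hKtop : K < ⊤ := by
    rw [hK]
    apply ENNReal.add_lt_top.2
    constructor
    · exact ENNReal.mul_lt_top ENNReal.ofReal_lt_top
        (ENNReal.add_lt_top.2 ⟨lt_top_iff_ne_top.2 h, ENNReal.one_lt_top⟩)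
    · exact ENNReal.ofReal_lt_top
  exact absurd hle (not_le.2 hKtop)

theorem sup_char {B : ℝ≥0∞} {Cnd : ℝ → Prop} (hB1 : 1 ≤ B)
    (hlt : ∀ p : ℝ, 1 ≤ p → ENNReal.ofReal p < B → Cnd p)
    (hgt : ∀ p : ℝ, 1 ≤ p → B < ENNReal.ofReal p → ¬ Cnd p) :
    (1 ⊔ ⨆ (p : ℝ) (_ : 1 ≤ p) (_ : Cnd p), ENNReal.ofReal p) = B := by
  set X := (1 : ℝ≥0∞) ⊔ ⨆ (p : ℝ) (_ : 1 ≤ p) (_ : Cnd p), ENNReal.ofReal p with hX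
  have hX1 : 1 ≤ X := le_sup_left
  apply le_antisymm
  · apply sup_le hB1
    apply iSup_le; intro p
    apply iSup_le; intro hp
    apply iSup_le; intro hC
    by_contra hcon
    exact hgt p hp (not_le.1 hcon) hC
  · by_contra hc
    push_neg at hc
    obtain ⟨d, hXd, hdB⟩ := exists_between hc
    have hdne : d ≠ ⊤ := ne_top_of_lt hdB
    set p := d.toReal with hpdef
    have h1d : (1:ℝ≥0∞) < d := lt_of_le_of_lt hX1 hXd
    have h1p : 1 < p := by
      have := (ENNReal.toReal_lt_toReal (by simp) hdne).2 h1d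
      simpa using this
    have hCp : Cnd p := hlt p h1p.le (by rw [hpdef, ENNReal.ofReal_toReal hdne]; exact hdB)
    have : ENNReal.ofReal p ≤ X := by
      rw [hX]
      apply le_sup_of_le_right
      exact le_iSup_of_le p (le_iSup_of_le h1p.le (le_iSup_of_le hCp le_rfl))
    rw [hpdef, ENNReal.ofReal_toReal hdne] at this
    exact absurd (lt_of_lt_of_le hXd this) (lt_irrefl _)
end TreeAux

end

noncomputable section

/-- For a non-constant continuous circle mapping `f`, the lower box dimension of the real
tree `T(f)` equals the lower variation index and the upper box dimension equals the upper
variation index. -/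
theorem box_dims_eq_varIndices (f : ℝ → ℝ) (hf : Continuous f)
    (hper : ∀ x, f (x + 1) = f x) (hnc : ∃ x y, f x ≠ f y)
    (a : ℝ) (ha : a ∈ Set.Icc (0 : ℝ) 1) (hmin : ∀ x ∈ Set.Icc (0 : ℝ) 1, f a ≤ f x) :
    lbdTree (fun x => f (x + a) - f a) = lowerVarIndex f ∧
    ubdTree (fun x => f (x + a) - f a) = upperVarIndex f := by
  classical
  set g : ℝ → ℝ := fun x => f (x + a) - f a with hgdef
  have hg : Continuous g := (hf.comp (continuous_id.add continuous_const)).sub continuous_const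
  have hgper : ∀ x, g (x + 1) = g x := by
    intro x
    show f (x + 1 + a) - f a = f (x + a) - f a
    rw [show x + 1 + a = (x + a) + 1 by ring, hper]
  have hrel_fg : ∀ s, f s = g (s - a) + f a := by
    intro s; show f s = (f (s - a + a) - f a) + f a
    rw [sub_add_cancel]; ring
  have hb2 : (1 - a) ∈ Set.Icc (0:ℝ) 1 := ⟨by linarith [ha.2], by linarith [ha.1]⟩
  have hrel_gf : ∀ s, g s = f (s - (1 - a)) + (-(f a)) := by
    intro s
    show f (s + a) - f a = f (s - (1 - a)) + (-(f a))
    have h1 : s - (1 - a) + 1 = s + a := by ring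
    have h2 := hper (s - (1 - a))
    rw [h1] at h2
    rw [← h2]; ring
  have hper_int : ∀ (k : ℤ) (x : ℝ), f (x + k) = f x := by
    intro k
    induction k using Int.induction_on with
    | zero => simp
    | succ n ih =>
      intro x
      have h1 : (x : ℝ) + ((n:ℤ) + 1 : ℤ) = (x + (n:ℤ)) + 1 := by push_cast; ring
      rw [h1, hper, ih]
    | pred n ih =>
      intro x
      have h1 : (x:ℝ) + (-(n:ℤ) - 1 : ℤ) + 1 = x + (-(n:ℤ) : ℤ) := by push_cast; ring
      have h2 := hper (x + (-(n:ℤ) - 1 : ℤ))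
      rw [h1] at h2
      rw [← h2, ih]
  have hg0 : g 0 = 0 := by show f (0 + a) - f a = 0; rw [zero_add]; ring
  -- nonconstancy witness
  have hw : ∃ w ∈ Set.Icc (0:ℝ) 1, g w ≠ 0 := by
    by_contra hcon
    push_neg at hcon
    have hconst : ∀ x : ℝ, f x = f a := by
      intro x
      have hfr1 : Int.fract (x - a) ∈ Set.Icc (0:ℝ) 1 :=
        ⟨Int.fract_nonneg _, (Int.fract_lt_one _).le⟩
      have h2 := hcon (Int.fract (x - a)) hfr1
      have h3 : f (Int.fract (x - a) + a) = f a := by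
        have : f (Int.fract (x - a) + a) - f a = 0 := h2
        linarith
      have h4 : Int.fract (x - a) + a = x - (⌊x - a⌋ : ℤ) := by
        rw [← Int.self_sub_floor]; ring
      rw [h4] at h3
      have h5 := hper_int ⌊x - a⌋ (x - (⌊x - a⌋ : ℤ))
      rw [sub_add_cancel] at h5
      rw [← h5] at h3
      exact h3
    obtain ⟨x, y, hxy⟩ := hnc
    exact hxy (by rw [hconst x, hconst y])
  obtain ⟨w, hw01, hwne⟩ := hw
  set c₀ := |g w| with hc₀
  have hc₀pos : 0 < c₀ := abs_pos.2 hwne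
  set NF : ℝ → ℕ := fun r => Nsep (treeDist g) (Set.Icc 0 1) r with hNF
  -- comparison inequalities
  have hNM : ∀ r : ℝ, 0 < r → (NF r : ℝ) ≤ 2 * ((TreeAux.Mc f) ((1/4) * r) : ℝ) + 2 := by
    intro r hr
    have h1 : NF r ≤ TreeAux.Mc g (r/4) + 1 := TreeAux.Nsep_le_Mc hg hr
    have h2 : TreeAux.Mc g (r/4) ≤ 2 * TreeAux.Mc f (r/4) + 1 :=
      TreeAux.chain_translate hf (by linarith : (0:ℝ) < r/4) hb2 hper hrel_gf
        (TreeAux.Mc_mem hg (by linarith : (0:ℝ) < r/4))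
    have h3 : (1/4 : ℝ) * r = r / 4 := by ring
    rw [h3]
    have h4 : NF r ≤ 2 * TreeAux.Mc f (r/4) + 2 := by omega
    exact_mod_cast h4
  have hMN : ∀ r : ℝ, 0 < r → ((TreeAux.Mc f) r : ℝ) ≤ 4 * (NF ((1/2) * r) : ℝ) + 1 := by
    intro r hr
    have h1 : TreeAux.Mc f r ≤ 2 * TreeAux.Mc g r + 1 :=
      TreeAux.chain_translate hg hr ha hgper hrel_fg (TreeAux.Mc_mem hf hr)
    have h2 : TreeAux.Mc g r ≤ 2 * NF (r/2) := TreeAux.Mc_le_two_Nsep hg hr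
    have h3 : (1/2:ℝ) * r = r / 2 := by ring
    rw [h3]
    have h4 : TreeAux.Mc f r ≤ 4 * NF (r/2) + 1 := by omega
    exact_mod_cast h4
  -- growth of NF
  have hgrow : ∀ᶠ r in nhdsWithin 0 (Set.Ioi (0:ℝ)), (c₀/8) / r ≤ (NF r : ℝ) := by
    have hmem : Set.Ioo (0:ℝ) (c₀/4) ∈ nhdsWithin 0 (Set.Ioi (0:ℝ)) :=
      Ioo_mem_nhdsGT (by linarith)
    filter_upwards [hmem] with r hr
    have hr0 : 0 < r := hr.1
    have h1 : c₀ ≤ ((TreeAux.Mc g (2*r) : ℝ) + 1) * (2*r) := by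
      have hb := TreeAux.value_bound hg (by linarith : (0:ℝ) < 2*r) hw01
      rw [hg0, sub_zero] at hb
      exact hb
    have h2 : (TreeAux.Mc g (2*r) : ℝ) ≤ 2 * (NF r : ℝ) := by
      have hb := TreeAux.Mc_le_two_Nsep hg (by linarith : (0:ℝ) < 2*r)
      rw [show (2*r)/2 = r by ring] at hb
      exact_mod_cast hb
    rw [div_le_iff₀ hr0]
    have h6 : (0:ℝ) ≤ (NF r : ℝ) := Nat.cast_nonneg _
    nlinarith [h6, hr.2]
  -- content identities
  have hcontU : ∀ p : ℝ, uVarContent f p =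
      Filter.limsup (fun r => ENNReal.ofReal (((TreeAux.Mc f) r : ℝ) * r ^ p))
        (nhdsWithin 0 (Set.Ioi (0:ℝ))) := by
    intro p
    apply Filter.limsup_congr
    filter_upwards [self_mem_nhdsWithin] with r hr
    exact TreeAux.prVar_eq hf hr p
  have hcontL : ∀ p : ℝ, lVarContent f p =
      Filter.liminf (fun r => ENNReal.ofReal (((TreeAux.Mc f) r : ℝ) * r ^ p))
        (nhdsWithin 0 (Set.Ioi (0:ℝ))) := by
    intro p
    apply Filter.liminf_congr
    filter_upwards [self_mem_nhdsWithin] with r hr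
    exact TreeAux.prVar_eq hf hr p
  have h1lo : 1 ≤ Filter.liminf (TreeAux.uexp NF) (nhdsWithin 0 (Set.Ioi (0:ℝ))) :=
    TreeAux.one_le_liminf_uexp (by linarith : (0:ℝ) < c₀/8) hgrow
  have h1up : 1 ≤ Filter.limsup (TreeAux.uexp NF) (nhdsWithin 0 (Set.Ioi (0:ℝ))) :=
    le_trans h1lo Filter.liminf_le_limsup
  constructor
  · -- lower box dimension
    have hchar := TreeAux.sup_char (B := Filter.liminf (TreeAux.uexp NF)
        (nhdsWithin 0 (Set.Ioi (0:ℝ)))) (Cnd := fun p => lVarContent f p = ⊤) h1lo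
      (fun p hp hplt => by
        have h2 := TreeAux.crit_lt_liminf (by linarith : (0:ℝ) ≤ p) hplt
        have h3 := TreeAux.transfer_liminf_top (F₁ := NF) (F₂ := TreeAux.Mc f)
          (by norm_num : (0:ℝ) < 1/4) (by norm_num : (0:ℝ) ≤ 2) (by norm_num : (0:ℝ) ≤ 2)
          (by linarith : (0:ℝ) ≤ p) (fun r hr => hNM r hr) h2
        show lVarContent f p = ⊤
        rw [hcontL p]
        exact h3)
      (fun p hp hpgt hcon => by
        have hcon' : lVarContent f p = ⊤ := hcon
        rw [hcontL p] at hcon'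
        have h3 := TreeAux.transfer_liminf_top (F₁ := TreeAux.Mc f) (F₂ := NF)
          (by norm_num : (0:ℝ) < 1/2) (by norm_num : (0:ℝ) ≤ 4) (by norm_num : (0:ℝ) ≤ 1)
          (by linarith : (0:ℝ) ≤ p) (fun r hr => hMN r hr) hcon'
        exact TreeAux.crit_gt_liminf (by linarith : (0:ℝ) < p) hpgt h3)
    exact hchar.symm
  · have hchar := TreeAux.sup_char (B := Filter.limsup (TreeAux.uexp NF)
        (nhdsWithin 0 (Set.Ioi (0:ℝ)))) (Cnd := fun p => uVarContent f p = ⊤) h1up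
      (fun p hp hplt => by
        have h2 := TreeAux.crit_lt_limsup (by linarith : (0:ℝ) ≤ p) hplt
        have h3 := TreeAux.transfer_limsup_top (F₁ := NF) (F₂ := TreeAux.Mc f)
          (by norm_num : (0:ℝ) < 1/4) (by norm_num : (0:ℝ) ≤ 2) (by norm_num : (0:ℝ) ≤ 2)
          (by linarith : (0:ℝ) ≤ p) (fun r hr => hNM r hr) h2
        show uVarContent f p = ⊤
        rw [hcontU p]
        exact h3)
      (fun p hp hpgt hcon => by
        have hcon' : uVarContent f p = ⊤ := hcon
        rw [hcontU p] at hcon'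
        have h3 := TreeAux.transfer_limsup_top (F₁ := TreeAux.Mc f) (F₂ := NF)
          (by norm_num : (0:ℝ) < 1/2) (by norm_num : (0:ℝ) ≤ 4) (by norm_num : (0:ℝ) ≤ 1)
          (by linarith : (0:ℝ) ≤ p) (fun r hr => hMN r hr) hcon'
        exact TreeAux.crit_gt_limsup (by linarith : (0:ℝ) < p) hpgt h3)
    exact hchar.symm


end
end

section
/- Let f : S^1 → ℝ be continuous and non-constant, p ≥ 1, and suppose that the real tree T(f) is a doubling metric space. Then there exists a constant C > 0 such that for all ε > 0 there exists r_0 > 0 with C^{-1}·V_r^p(f) − ε ≤ N_r(T(f))·r^p ≤ C·V_r^p(f) + ε for all 0 < r < r_0, where N_r(T(f)) denotes the maximal cardinality of an r-separated subset of T(f). -/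
open Set Filter Metric Topology
open scoped ENNReal NNReal

noncomputable section
namespace TreeAuxPf

open Set

variable {g : ℝ → ℝ}

lemma treeDist_comm (g : ℝ → ℝ) (x y : ℝ) : treeDist g x y = treeDist g y x := by
  unfold treeDist; rw [Set.uIcc_comm]; ring

lemma mInf_mem (hg : Continuous g) {x y : ℝ} (h : x ≤ y) :
    sInf (g '' Set.Icc x y) ∈ g '' Set.Icc x y :=
  (isCompact_Icc.image hg).sInf_mem ((Set.nonempty_Icc.2 h).image g)

lemma mInf_le (hg : Continuous g) {x y z : ℝ} (hz : z ∈ Set.Icc x y) :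
    sInf (g '' Set.Icc x y) ≤ g z :=
  csInf_le (isCompact_Icc.image hg).bddBelow ⟨z, hz, rfl⟩

lemma treeDist_eq (g : ℝ → ℝ) {x y : ℝ} (h : x ≤ y) :
    treeDist g x y = g x + g y - 2 * sInf (g '' Set.Icc x y) := by
  unfold treeDist; rw [Set.uIcc_of_le h]

lemma treeDist_self (g : ℝ → ℝ) (x : ℝ) : treeDist g x x = 0 := by
  unfold treeDist
  rw [Set.uIcc_self, Set.image_singleton, csInf_singleton]; ring

lemma abs_le_treeDist (hg : Continuous g) (x y : ℝ) :
    |g x - g y| ≤ treeDist g x y := by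
  rcases le_total x y with h | h
  · rw [treeDist_eq g h]
    have h1 := mInf_le hg (Set.left_mem_Icc.2 h)
    have h2 := mInf_le hg (Set.right_mem_Icc.2 h)
    rw [abs_sub_le_iff]; constructor <;> linarith
  · rw [treeDist_comm, treeDist_eq g h]
    have h1 := mInf_le hg (Set.left_mem_Icc.2 h)
    have h2 := mInf_le hg (Set.right_mem_Icc.2 h)
    rw [abs_sub_le_iff]; constructor <;> linarith

lemma treeDist_nonneg (hg : Continuous g) (x y : ℝ) : 0 ≤ treeDist g x y :=
  le_trans (abs_nonneg _) (abs_le_treeDist hg x y)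

lemma mInf_mono (hg : Continuous g) {x y x' y' : ℝ} (h : x ≤ y) (hsub : Set.Icc x' y' ⊆ Set.Icc x y)
    (hne : x' ≤ y') : sInf (g '' Set.Icc x y) ≤ sInf (g '' Set.Icc x' y') :=
  le_csInf ((Set.nonempty_Icc.2 hne).image g)
    (fun b ⟨z, hz, hbz⟩ => hbz ▸ mInf_le hg (hsub hz))

-- triangle, middle case
private lemma tri_mid (hg : Continuous g) {x y z : ℝ} (hxy : x ≤ y) (hyz : y ≤ z) :
    treeDist g x z ≤ treeDist g x y + treeDist g y z := by
  rw [treeDist_eq g hxy, treeDist_eq g hyz, treeDist_eq g (hxy.trans hyz)]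
  obtain ⟨w, hw, hweq⟩ := mInf_mem hg (hxy.trans hyz)
  have hy1 : sInf (g '' Set.Icc x y) ≤ g y := mInf_le hg (Set.right_mem_Icc.2 hxy)
  have hy2 : sInf (g '' Set.Icc y z) ≤ g y := mInf_le hg (Set.left_mem_Icc.2 hyz)
  rcases le_total w y with hwy | hwy
  · have : sInf (g '' Set.Icc x y) ≤ g w := mInf_le hg ⟨hw.1, hwy⟩
    linarith [hweq ▸ this]
  · have : sInf (g '' Set.Icc y z) ≤ g w := mInf_le hg ⟨hwy, hw.2⟩
    linarith [hweq ▸ this]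

-- y to the left of x ≤ z
private lemma tri_left (hg : Continuous g) {x y z : ℝ} (hyx : y ≤ x) (hxz : x ≤ z) :
    treeDist g x z ≤ treeDist g x y + treeDist g y z := by
  rw [treeDist_eq g hxz, treeDist_comm g x y, treeDist_eq g hyx, treeDist_eq g (hyx.trans hxz)]
  have h1 : sInf (g '' Set.Icc y z) ≤ sInf (g '' Set.Icc x z) :=
    mInf_mono hg (hyx.trans hxz) (Set.Icc_subset_Icc_left hyx) hxz
  have h2 : sInf (g '' Set.Icc y x) ≤ g y := mInf_le hg (Set.left_mem_Icc.2 hyx)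
  linarith

private lemma tri_right (hg : Continuous g) {x y z : ℝ} (hxz : x ≤ z) (hzy : z ≤ y) :
    treeDist g x z ≤ treeDist g x y + treeDist g y z := by
  rw [treeDist_eq g hxz, treeDist_eq g (hxz.trans hzy), treeDist_comm g y z, treeDist_eq g hzy]
  have h1 : sInf (g '' Set.Icc x y) ≤ sInf (g '' Set.Icc x z) :=
    mInf_mono hg (hxz.trans hzy) (Set.Icc_subset_Icc_right hzy) hxz
  have h2 : sInf (g '' Set.Icc z y) ≤ g y := mInf_le hg (Set.right_mem_Icc.2 hzy)
  linarith

private lemma tri_half (hg : Continuous g) {x z : ℝ} (hxz : x ≤ z) (y : ℝ) :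
    treeDist g x z ≤ treeDist g x y + treeDist g y z := by
  rcases le_total y x with h | h
  · exact tri_left hg h hxz
  · rcases le_total y z with h' | h'
    · exact tri_mid hg h h'
    · exact tri_right hg hxz h'

lemma treeDist_triangle (hg : Continuous g) (x y z : ℝ) :
    treeDist g x z ≤ treeDist g x y + treeDist g y z := by
  rcases le_total x z with hxz | hzx
  · exact tri_half hg hxz y
  · rw [treeDist_comm g x z, treeDist_comm g x y, treeDist_comm g y z]
    rw [add_comm]
    exact tri_half hg hzx y

end TreeAuxPf
namespace TreeAuxPf
open Set

variable {g : ℝ → ℝ}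

/-- separated sets have bounded cardinality -/
lemma sep_card_bound (hg : Continuous g) {r : ℝ} (hr : 0 < r) :
    ∃ B : ℕ, ∀ s : Finset ℝ, ↑s ⊆ Set.Icc (0:ℝ) 1 →
      (∀ x ∈ s, ∀ y ∈ s, x ≠ y → r < treeDist g x y) → s.card ≤ B := by
  have huc : UniformContinuousOn g (Set.Icc 0 1) :=
    isCompact_Icc.uniformContinuousOn_of_continuous hg.continuousOn
  rw [Metric.uniformContinuousOn_iff] at huc
  obtain ⟨δ, hδ, hδ'⟩ := huc (r/2) (by linarith)
  refine ⟨⌊1/δ⌋₊ + 1, fun s hsub hsep => ?_⟩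
  have hsepδ : ∀ x ∈ s, ∀ y ∈ s, x ≠ y → δ ≤ |x - y| := by
    intro x hx y hy hne
    by_contra hlt
    push_neg at hlt
    have hd := hsep x hx y hy hne
    -- wlog x ≤ y
    rcases le_total x y with hxy | hxy
    · obtain ⟨w, hw, hweq⟩ := mInf_mem hg hxy
      have hwI : w ∈ Set.Icc (0:ℝ) 1 :=
        ⟨le_trans (hsub hx).1 hw.1, le_trans hw.2 (hsub hy).2⟩
      have h1 : dist x w < δ := by
        rw [Real.dist_eq]; rw [abs_sub_lt_iff]
        constructor <;> [skip; skip] <;>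
          · have := hw.1; have := hw.2; have := abs_sub_lt_iff.mp hlt; linarith [this.1, this.2]
      have h2 : dist y w < δ := by
        rw [Real.dist_eq]; rw [abs_sub_lt_iff]
        constructor <;>
          · have := hw.1; have := hw.2; have := abs_sub_lt_iff.mp hlt; linarith [this.1, this.2]
      have e1 := hδ' x (hsub hx) w hwI h1
      have e2 := hδ' y (hsub hy) w hwI h2
      rw [Real.dist_eq] at e1 e2
      rw [treeDist_eq g hxy, ← hweq] at hd
      have := abs_sub_lt_iff.mp e1
      have := abs_sub_lt_iff.mp e2
      linarith [(abs_sub_lt_iff.mp e1).1, (abs_sub_lt_iff.mp e2).1]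
    · obtain ⟨w, hw, hweq⟩ := mInf_mem hg hxy
      have hwI : w ∈ Set.Icc (0:ℝ) 1 :=
        ⟨le_trans (hsub hy).1 hw.1, le_trans hw.2 (hsub hx).2⟩
      have h1 : dist x w < δ := by
        rw [Real.dist_eq]; rw [abs_sub_lt_iff]
        constructor <;>
          · have := hw.1; have := hw.2; have := abs_sub_lt_iff.mp hlt; linarith [this.1, this.2]
      have h2 : dist y w < δ := by
        rw [Real.dist_eq]; rw [abs_sub_lt_iff]
        constructor <;>
          · have := hw.1; have := hw.2; have := abs_sub_lt_iff.mp hlt; linarith [this.1, this.2]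
      have e1 := hδ' x (hsub hx) w hwI h1
      have e2 := hδ' y (hsub hy) w hwI h2
      rw [Real.dist_eq] at e1 e2
      rw [treeDist_comm g, treeDist_eq g hxy, ← hweq] at hd
      linarith [(abs_sub_lt_iff.mp e1).1, (abs_sub_lt_iff.mp e2).1]
  -- now card bound via floor injection
  have : s.card ≤ (Finset.range (⌊1/δ⌋₊ + 1)).card := by
    apply Finset.card_le_card_of_injOn (fun x => ⌊x/δ⌋₊)
    · intro x hx
      rw [Finset.coe_range, Set.mem_Iio, Nat.lt_succ_iff]
      refine Nat.floor_le_floor ?_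
      gcongr
      exact (hsub hx).2
    · intro x hx y hy hfe
      by_contra hne
      have hs := hsepδ x (by exact_mod_cast hx) y (by exact_mod_cast hy) hne
      have hx0 : (0:ℝ) ≤ x / δ := div_nonneg (hsub hx).1 hδ.le
      have hy0 : (0:ℝ) ≤ y / δ := div_nonneg (hsub hy).1 hδ.le
      have l1 : (⌊x/δ⌋₊ : ℝ) ≤ x / δ := Nat.floor_le hx0
      have l2 : x / δ < ⌊x/δ⌋₊ + 1 := Nat.lt_floor_add_one _
      have l3 : (⌊y/δ⌋₊ : ℝ) ≤ y / δ := Nat.floor_le hy0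
      have l4 : y / δ < ⌊y/δ⌋₊ + 1 := Nat.lt_floor_add_one _
      simp only at hfe
      rw [hfe] at l1 l2
      have b1 : x < (↑⌊y/δ⌋₊ + 1) * δ := by
        rw [← div_lt_iff₀ hδ] at *; linarith
      have b2 : (↑⌊y/δ⌋₊ : ℝ) * δ ≤ x := by
        rw [← le_div_iff₀ hδ]; exact l1
      have b3 : y < (↑⌊y/δ⌋₊ + 1) * δ := by
        rw [← div_lt_iff₀ hδ]; linarith
      have b4 : (↑⌊y/δ⌋₊ : ℝ) * δ ≤ y := by
        rw [← le_div_iff₀ hδ]; exact l3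
      have : |x - y| < δ := abs_sub_lt_iff.mpr ⟨by linarith, by linarith⟩
      linarith
  simpa using this

/-- the defining set of `Nsep` -/
lemma nsep_set_eq (d : ℝ → ℝ → ℝ) (A : Set ℝ) (r : ℝ) :
    Nsep d A r = sSup {n | ∃ s : Finset ℝ, (s : Set ℝ) ⊆ A ∧ s.card = n ∧
      ∀ x ∈ s, ∀ y ∈ s, x ≠ y → r < d x y} := rfl

lemma nsep_zero_mem (d : ℝ → ℝ → ℝ) (A : Set ℝ) (r : ℝ) :
    0 ∈ {n | ∃ s : Finset ℝ, (s : Set ℝ) ⊆ A ∧ s.card = n ∧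
      ∀ x ∈ s, ∀ y ∈ s, x ≠ y → r < d x y} :=
  ⟨∅, by simp, by simp, by simp⟩

lemma nsep_bddAbove (hg : Continuous g) {r : ℝ} (hr : 0 < r) :
    BddAbove {n | ∃ s : Finset ℝ, (s : Set ℝ) ⊆ Set.Icc (0:ℝ) 1 ∧ s.card = n ∧
      ∀ x ∈ s, ∀ y ∈ s, x ≠ y → r < treeDist g x y} := by
  obtain ⟨B, hB⟩ := sep_card_bound hg hr
  exact ⟨B, fun n ⟨s, hs1, hs2, hs3⟩ => hs2 ▸ hB s hs1 hs3⟩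

lemma le_nsep (hg : Continuous g) {r : ℝ} (hr : 0 < r) (s : Finset ℝ)
    (h1 : (s : Set ℝ) ⊆ Set.Icc (0:ℝ) 1)
    (h2 : ∀ x ∈ s, ∀ y ∈ s, x ≠ y → r < treeDist g x y) :
    s.card ≤ Nsep (treeDist g) (Set.Icc 0 1) r :=
  le_csSup (nsep_bddAbove hg hr) ⟨s, h1, rfl, h2⟩

lemma nsep_attained (hg : Continuous g) {r : ℝ} (hr : 0 < r) :
    ∃ s : Finset ℝ, (s : Set ℝ) ⊆ Set.Icc (0:ℝ) 1 ∧
      s.card = Nsep (treeDist g) (Set.Icc 0 1) r ∧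
      ∀ x ∈ s, ∀ y ∈ s, x ≠ y → r < treeDist g x y :=
  Nat.sSup_mem ⟨0, nsep_zero_mem _ _ _⟩ (nsep_bddAbove hg hr)

lemma nsep_anti (hg : Continuous g) {r r' : ℝ} (hr : 0 < r) (hrr : r ≤ r') :
    Nsep (treeDist g) (Set.Icc 0 1) r' ≤ Nsep (treeDist g) (Set.Icc 0 1) r := by
  refine csSup_le_csSup (nsep_bddAbove hg hr) ⟨0, nsep_zero_mem _ _ _⟩ ?_
  rintro n ⟨s, h1, h2, h3⟩
  exact ⟨s, h1, h2, fun x hx y hy hne => lt_of_le_of_lt hrr (h3 x hx y hy hne)⟩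

/-- a maximal separated set is also a net -/
lemma nsep_net (hg : Continuous g) {r : ℝ} (hr : 0 < r) :
    ∃ T : Finset ℝ, (T : Set ℝ) ⊆ Set.Icc (0:ℝ) 1 ∧
      T.card = Nsep (treeDist g) (Set.Icc 0 1) r ∧
      (∀ x ∈ T, ∀ y ∈ T, x ≠ y → r < treeDist g x y) ∧
      ∀ y ∈ Set.Icc (0:ℝ) 1, ∃ t ∈ T, treeDist g t y ≤ r := by
  obtain ⟨T, h1, h2, h3⟩ := nsep_attained hg hr
  refine ⟨T, h1, h2, h3, fun y hy => ?_⟩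
  by_contra hcon
  push_neg at hcon
  have hyT : y ∉ T := fun hyT => by
    have := hcon y hyT
    rw [treeDist_self] at this
    linarith
  have hvalid : ((insert y T : Finset ℝ) : Set ℝ) ⊆ Set.Icc (0:ℝ) 1 := by
    rw [Finset.coe_insert]
    exact Set.insert_subset hy h1
  have hsep : ∀ x ∈ insert y T, ∀ z ∈ insert y T, x ≠ z → r < treeDist g x z := by
    intro x hx z hz hne
    rcases Finset.mem_insert.mp hx with rfl | hx2
    · rcases Finset.mem_insert.mp hz with rfl | hz2
      · exact absurd rfl hne
      · rw [treeDist_comm]; exact hcon z hz2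
    · rcases Finset.mem_insert.mp hz with hze | hz2
      · subst hze; exact hcon x hx2
      · exact h3 x hx2 z hz2 hne
  have := le_nsep hg hr _ hvalid hsep
  rw [Finset.card_insert_of_notMem hyT, h2] at this
  omega

end TreeAuxPf
namespace TreeAuxPf
open Set

variable {g : ℝ → ℝ} {K : ℕ}

lemma doubling_count (hg : Continuous g)
    (hdou : ∀ x ∈ Set.Icc (0:ℝ) 1, ∀ R : ℝ, 0 < R →
      ∃ s : Finset ℝ, (s : Set ℝ) ⊆ Set.Icc (0:ℝ) 1 ∧ s.card ≤ K ∧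
        ∀ y ∈ Set.Icc (0:ℝ) 1, treeDist g x y < 2*R → ∃ c ∈ s, treeDist g c y < R) :
    ∀ j : ℕ, ∀ R : ℝ, 0 < R → ∀ ρ : ℝ, 4*R ≤ 2^j * ρ →
    ∀ x ∈ Set.Icc (0:ℝ) 1, ∀ P : Finset ℝ, (P : Set ℝ) ⊆ Set.Icc (0:ℝ) 1 →
    (∀ u ∈ P, ∀ v ∈ P, u ≠ v → ρ < treeDist g u v) →
    (∀ u ∈ P, treeDist g x u < 2*R) → P.card ≤ K^j := by
  intro j
  induction j with
  | zero =>
    intro R hR ρ hcond x hx P hPsub hPsep hPball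
    simp only [pow_zero]
    rw [pow_zero, one_mul] at hcond
    apply Finset.card_le_one.2
    intro u hu v hv
    by_contra hne
    have h1 := hPsep u hu v hv hne
    have h2 := hPball u hu
    have h3 := hPball v hv
    have h4 := treeDist_triangle hg u x v
    rw [treeDist_comm g u x] at h4
    linarith
  | succ j ih =>
    intro R hR ρ hcond x hx P hPsub hPsep hPball
    obtain ⟨s, hs1, hs2, hs3⟩ := hdou x hx R hR
    classical
    set σ : ℝ → ℝ := fun u =>
      if h : ∃ c ∈ s, treeDist g c u < R then h.choose else x with hσ
    have hσmem : ∀ u ∈ P, σ u ∈ s ∧ treeDist g (σ u) u < R := by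
      intro u hu
      have hex : ∃ c ∈ s, treeDist g c u < R := hs3 u (hPsub hu) (hPball u hu)
      simp only [hσ, dif_pos hex]
      exact ⟨hex.choose_spec.1, hex.choose_spec.2⟩
    have hcard : P.card = ∑ c ∈ s, (P.filter (fun u => σ u = c)).card :=
      Finset.card_eq_sum_card_fiberwise (fun u hu => (hσmem u hu).1)
    have hfiber : ∀ c ∈ s, (P.filter (fun u => σ u = c)).card ≤ K^j := by
      intro c hc
      apply ih (R/2) (by linarith) ρ (by rw [pow_succ] at hcond; linarith) c (hs1 hc)
      · exact fun u hu => hPsub (Finset.mem_filter.mp hu).1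
      · intro u hu v hv hne
        exact hPsep u (Finset.mem_filter.mp hu).1 v (Finset.mem_filter.mp hv).1 hne
      · intro u hu
        obtain ⟨huP, huc⟩ := Finset.mem_filter.mp hu
        have := (hσmem u huP).2
        rw [huc] at this
        linarith
    calc P.card = ∑ c ∈ s, (P.filter (fun u => σ u = c)).card := hcard
      _ ≤ ∑ _c ∈ s, K^j := Finset.sum_le_sum hfiber
      _ = s.card * K^j := by rw [Finset.sum_const, smul_eq_mul]
      _ ≤ K * K^j := Nat.mul_le_mul_right _ hs2
      _ = K^(j+1) := by rw [pow_succ, mul_comm]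

lemma nsep_scale (hg : Continuous g)
    (hdou : ∀ x ∈ Set.Icc (0:ℝ) 1, ∀ R : ℝ, 0 < R →
      ∃ s : Finset ℝ, (s : Set ℝ) ⊆ Set.Icc (0:ℝ) 1 ∧ s.card ≤ K ∧
        ∀ y ∈ Set.Icc (0:ℝ) 1, treeDist g x y < 2*R → ∃ c ∈ s, treeDist g c y < R)
    {r : ℝ} (hr : 0 < r) :
    Nsep (treeDist g) (Set.Icc 0 1) r ≤ K^3 * Nsep (treeDist g) (Set.Icc 0 1) (2*r) := by
  obtain ⟨P, hP1, hP2, hP3⟩ := nsep_attained hg hr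
  obtain ⟨T, hT1, hT2, hT3, hT4⟩ := nsep_net hg (show (0:ℝ) < 2*r by linarith)
  classical
  set σ : ℝ → ℝ := fun u =>
    if h : ∃ t ∈ T, treeDist g t u ≤ 2*r then h.choose else 0 with hσ
  have hσmem : ∀ u ∈ P, σ u ∈ T ∧ treeDist g (σ u) u ≤ 2*r := by
    intro u hu
    have hex : ∃ t ∈ T, treeDist g t u ≤ 2*r := hT4 u (hP1 hu)
    simp only [hσ, dif_pos hex]
    exact ⟨hex.choose_spec.1, hex.choose_spec.2⟩
  have hcard : P.card = ∑ t ∈ T, (P.filter (fun u => σ u = t)).card :=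
    Finset.card_eq_sum_card_fiberwise (fun u hu => (hσmem u hu).1)
  have hfiber : ∀ t ∈ T, (P.filter (fun u => σ u = t)).card ≤ K^3 := by
    intro t ht
    apply doubling_count hg hdou 3 (2*r) (by linarith) r (by norm_num; linarith) t (hT1 ht)
    · exact fun u hu => hP1 (Finset.mem_filter.mp hu).1
    · intro u hu v hv hne
      exact hP3 u (Finset.mem_filter.mp hu).1 v (Finset.mem_filter.mp hv).1 hne
    · intro u hu
      obtain ⟨huP, hut⟩ := Finset.mem_filter.mp hu
      have := (hσmem u huP).2
      rw [hut] at this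
      linarith
  calc Nsep (treeDist g) (Set.Icc 0 1) r = P.card := hP2.symm
    _ = ∑ t ∈ T, (P.filter (fun u => σ u = t)).card := hcard
    _ ≤ ∑ _t ∈ T, K^3 := Finset.sum_le_sum hfiber
    _ = T.card * K^3 := by rw [Finset.sum_const, smul_eq_mul]
    _ = K^3 * Nsep (treeDist g) (Set.Icc 0 1) (2*r) := by rw [hT2, mul_comm]

lemma nsep_fifth (hg : Continuous g)
    (hdou : ∀ x ∈ Set.Icc (0:ℝ) 1, ∀ R : ℝ, 0 < R →
      ∃ s : Finset ℝ, (s : Set ℝ) ⊆ Set.Icc (0:ℝ) 1 ∧ s.card ≤ K ∧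
        ∀ y ∈ Set.Icc (0:ℝ) 1, treeDist g x y < 2*R → ∃ c ∈ s, treeDist g c y < R)
    {r : ℝ} (hr : 0 < r) :
    Nsep (treeDist g) (Set.Icc 0 1) (r/5) ≤ K^9 * Nsep (treeDist g) (Set.Icc 0 1) r := by
  have h1 := nsep_scale hg hdou (show (0:ℝ) < r/5 by linarith)
  have h2 := nsep_scale hg hdou (show (0:ℝ) < 2*(r/5) by linarith)
  have h3 := nsep_scale hg hdou (show (0:ℝ) < 2*(2*(r/5)) by linarith)
  have h4 : Nsep (treeDist g) (Set.Icc 0 1) (2*(2*(2*(r/5)))) ≤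
      Nsep (treeDist g) (Set.Icc 0 1) r := nsep_anti hg hr (by linarith)
  calc Nsep (treeDist g) (Set.Icc 0 1) (r/5)
      ≤ K^3 * Nsep (treeDist g) (Set.Icc 0 1) (2*(r/5)) := h1
    _ ≤ K^3 * (K^3 * Nsep (treeDist g) (Set.Icc 0 1) (2*(2*(r/5)))) := mul_le_mul_right h2 _
    _ ≤ K^3 * (K^3 * (K^3 * Nsep (treeDist g) (Set.Icc 0 1) (2*(2*(2*(r/5))))))
        := mul_le_mul_right (mul_le_mul_right h3 _) _
    _ ≤ K^3 * (K^3 * (K^3 * Nsep (treeDist g) (Set.Icc 0 1) r))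
        := mul_le_mul_right (mul_le_mul_right (mul_le_mul_right h4 _) _) _
    _ = K^9 * Nsep (treeDist g) (Set.Icc 0 1) r := by ring

lemma nsep_quad (hg : Continuous g)
    (hdou : ∀ x ∈ Set.Icc (0:ℝ) 1, ∀ R : ℝ, 0 < R →
      ∃ s : Finset ℝ, (s : Set ℝ) ⊆ Set.Icc (0:ℝ) 1 ∧ s.card ≤ K ∧
        ∀ y ∈ Set.Icc (0:ℝ) 1, treeDist g x y < 2*R → ∃ c ∈ s, treeDist g c y < R)
    {r : ℝ} (hr : 0 < r) :
    Nsep (treeDist g) (Set.Icc 0 1) r ≤ K^6 * Nsep (treeDist g) (Set.Icc 0 1) (4*r) := by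
  have h1 := nsep_scale hg hdou hr
  have h2 := nsep_scale hg hdou (show (0:ℝ) < 2*r by linarith)
  have h4 : Nsep (treeDist g) (Set.Icc 0 1) (2*(2*r)) =
      Nsep (treeDist g) (Set.Icc 0 1) (4*r) := by norm_num [two_mul]; ring_nf
  calc Nsep (treeDist g) (Set.Icc 0 1) r
      ≤ K^3 * Nsep (treeDist g) (Set.Icc 0 1) (2*r) := h1
    _ ≤ K^3 * (K^3 * Nsep (treeDist g) (Set.Icc 0 1) (2*(2*r))) := mul_le_mul_right h2 _
    _ = K^6 * Nsep (treeDist g) (Set.Icc 0 1) (4*r) := by rw [h4]; ring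

end TreeAuxPf
namespace TreeAuxPf
open Set

/-- IVT step: find a point with increment exactly `r`. -/
lemma exists_step {f : ℝ → ℝ} (hf : Continuous f) {c w r : ℝ} (hcw : c ≤ w) (hr : 0 < r)
    (h : r ≤ |f w - f c|) : ∃ z, c < z ∧ z ≤ w ∧ |f z - f c| = r := by
  have hcont : ContinuousOn (fun x => |f x - f c|) (Set.Icc c w) :=
    ((hf.sub continuous_const).abs).continuousOn
  have hmem : r ∈ Set.Icc (|f c - f c|) (|f w - f c|) := by
    simp only [sub_self, abs_zero]
    exact ⟨hr.le, h⟩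
  obtain ⟨z, hz, hzr⟩ := intermediate_value_Icc hcw hcont hmem
  refine ⟨z, ?_, hz.2, hzr⟩
  rcases eq_or_lt_of_le hz.1 with hzc | h'
  · exfalso
    rw [← hzc] at hzr
    simp only [sub_self, abs_zero] at hzr
    linarith
  · exact h'

/-- oscillation from tree distance -/
lemma gap_osc {g : ℝ → ℝ} (hg : Continuous g) {u v r : ℝ} (huv : u ≤ v)
    (h : 4*r < treeDist g u v) :
    ∃ P ∈ Set.Icc u v, ∃ Q ∈ Set.Icc u v, 2*r < g P - g Q := by
  obtain ⟨P, hP, hPmax⟩ := isCompact_Icc.exists_isMaxOn (Set.nonempty_Icc.2 huv) hg.continuousOn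
  obtain ⟨Q, hQ, hQmin⟩ := isCompact_Icc.exists_isMinOn (Set.nonempty_Icc.2 huv) hg.continuousOn
  have h1 : g u ≤ g P := hPmax (Set.left_mem_Icc.2 huv)
  have h2 : g v ≤ g P := hPmax (Set.right_mem_Icc.2 huv)
  have h3 : g Q ≤ sInf (g '' Set.Icc u v) := by
    refine le_csInf ((Set.nonempty_Icc.2 huv).image g) ?_
    rintro b ⟨z, hz, rfl⟩
    exact hQmin hz
  rw [treeDist_eq g huv] at h
  exact ⟨P, hP, Q, hQ, by linarith⟩

open Classical in
/-- recursively defined chain of exact-`r` increments -/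
noncomputable def chAux (f : ℝ → ℝ) (r a : ℝ) (tt : ℕ → ℝ) : ℕ → ℝ
  | 0 => tt 0 + a
  | (i+1) =>
    if h : ∃ z, chAux f r a tt i < z ∧ z ≤ tt (i+1) + a ∧ |f z - f (chAux f r a tt i)| = r
    then h.choose else chAux f r a tt i + 1

/-- initial-segment description of a monotone filter -/
lemma initseg {N : ℕ} (P : ℕ → Prop) [DecidablePred P]
    (hmono : ∀ i j, i ≤ j → j < N → P j → P i) :
    ∀ i < N, (P i ↔ i < ((Finset.range N).filter P).card) := by
  intro i hi
  set s := (Finset.range N).filter P with hs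
  constructor
  · intro hPi
    by_contra hlt
    push_neg at hlt
    have hsub : (Finset.range (i+1)) ⊆ s := by
      intro j hj
      rw [Finset.mem_range, Nat.lt_succ_iff] at hj
      rw [hs, Finset.mem_filter, Finset.mem_range]
      exact ⟨lt_of_le_of_lt hj hi, hmono j i hj hi hPi⟩
    have hcard := Finset.card_le_card hsub
    rw [Finset.card_range] at hcard
    omega
  · intro hlt
    by_contra hPi
    have hsub : s ⊆ Finset.range i := by
      intro j hj
      rw [hs, Finset.mem_filter, Finset.mem_range] at hj
      rw [Finset.mem_range]
      by_contra hji
      push_neg at hji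
      exact hPi (hmono i j hji hj.1 hj.2)
    have hcard := Finset.card_le_card hsub
    rw [Finset.card_range] at hcard
    omega

/-- lower bound for prVar from an explicit partition -/
lemma prVar_ge (f : ℝ → ℝ) (p r : ℝ) (n₀ : ℕ) (x : Fin (n₀+1) → ℝ)
    (hpart : IsPartition n₀ x)
    (hincr : ∀ i : Fin n₀, |f (x i.castSucc) - f (x i.succ)| = r) :
    ENNReal.ofReal ((n₀:ℝ) * r^p) ≤ prVar f p r := by
  have hv : varSum f p n₀ x = (n₀:ℝ) * r^p := by
    unfold varSum
    rw [Finset.sum_congr rfl (fun i _ => by rw [hincr i])]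
    rw [Finset.sum_const, Finset.card_univ, Fintype.card_fin, nsmul_eq_mul]
  calc ENNReal.ofReal ((n₀:ℝ) * r^p) = ENNReal.ofReal (varSum f p n₀ x) := by rw [hv]
    _ ≤ prVar f p r :=
      le_iSup_of_le n₀ (le_iSup_of_le x (le_iSup_of_le hpart (le_iSup_of_le hincr le_rfl)))

end TreeAuxPf
namespace TreeAuxPf
open Set

lemma prVar_lower {f : ℝ → ℝ} (hf : Continuous f) (hper : ∀ x, f (x + 1) = f x)
    {a : ℝ} (ha : a ∈ Set.Icc (0:ℝ) 1) (p : ℝ) {r : ℝ} (hr : 0 < r) :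
    ∃ n₀ : ℕ, ENNReal.ofReal ((n₀:ℝ) * r^p) ≤ prVar f p r ∧
      Nsep (treeDist (fun z => f (z+a) - f a)) (Set.Icc 0 1) (4*r) ≤ 2*(n₀+1) := by
  classical
  set g : ℝ → ℝ := fun z => f (z + a) - f a with hgdef
  have hg : Continuous g := (hf.comp (continuous_id.add continuous_const)).sub continuous_const
  set N := Nsep (treeDist g) (Set.Icc 0 1) (4*r) with hN
  rcases Nat.eq_zero_or_pos N with hN0 | hNpos
  · exact ⟨0, by simp, by omega⟩
  obtain ⟨T, hT1, hT2, hT3⟩ := nsep_attained hg (show (0:ℝ) < 4*r by linarith)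
  have hTcard : T.card = N := hT2
  set e := T.orderIsoOfFin hTcard with he
  set t : Fin N → ℝ := fun i => (e i : ℝ) with ht
  have tmono : StrictMono t := fun i j hij => by
    have h := e.strictMono hij
    exact_mod_cast h
  have tmem : ∀ i, t i ∈ Set.Icc (0:ℝ) 1 := fun i => hT1 (e i).2
  set tt : ℕ → ℝ := fun i => if h : i < N then t ⟨i, h⟩ else 2 with htt
  -- the key extension step
  have key : ∀ i : ℕ, i + 1 < N → chAux f r a tt i ≤ tt i + a →
      ∃ z, chAux f r a tt i < z ∧ z ≤ tt (i+1) + a ∧ |f z - f (chAux f r a tt i)| = r := by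
    intro i hi hle
    have hiN : i < N := by omega
    have htti : tt i = t ⟨i, hiN⟩ := dif_pos hiN
    have htti1 : tt (i+1) = t ⟨i+1, hi⟩ := dif_pos hi
    have hlt : t ⟨i, hiN⟩ < t ⟨i+1, hi⟩ := tmono (by simp [Fin.lt_def])
    have hsep : 4*r < treeDist g (t ⟨i, hiN⟩) (t ⟨i+1, hi⟩) :=
      hT3 _ (e ⟨i, hiN⟩).2 _ (e ⟨i+1, hi⟩).2 (ne_of_lt hlt)
    obtain ⟨P, hP, Q, hQ, hPQ⟩ := gap_osc hg hlt.le hsep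
    have hosc : 2*r < f (P + a) - f (Q + a) := by
      have hgP : g P = f (P + a) - f a := rfl
      have hgQ : g Q = f (Q + a) - f a := rfl
      rw [hgP, hgQ] at hPQ
      linarith
    set c := chAux f r a tt i with hcdef
    have hcP : c ≤ P + a := by
      have h1 : t ⟨i, hiN⟩ ≤ P := hP.1
      rw [htti] at hle
      linarith
    have hcQ : c ≤ Q + a := by
      have h1 : t ⟨i, hiN⟩ ≤ Q := hQ.1
      rw [htti] at hle
      linarith
    rcases le_or_gt r (|f (P + a) - f c|) with hw | hw1
    · obtain ⟨z, hz1, hz2, hz3⟩ := exists_step hf hcP hr hw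
      refine ⟨z, hz1, ?_, hz3⟩
      have h2 : P ≤ t ⟨i+1, hi⟩ := hP.2
      rw [htti1]
      linarith
    · have hw2 : r ≤ |f (Q + a) - f c| := by
        by_contra hq
        push_neg at hq
        have htri := abs_sub_le (f (P+a)) (f c) (f (Q+a))
        have habs : |f (P+a) - f (Q+a)| ≥ 2*r := le_of_lt (lt_of_lt_of_le hosc (le_abs_self _))
        rw [abs_sub_comm (f c) (f (Q+a))] at htri
        linarith
      obtain ⟨z, hz1, hz2, hz3⟩ := exists_step hf hcQ hr hw2
      refine ⟨z, hz1, ?_, hz3⟩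
      have h2 : Q ≤ t ⟨i+1, hi⟩ := hQ.2
      rw [htti1]
      linarith
  -- invariant
  have inv : ∀ i, i < N → chAux f r a tt i ≤ tt i + a := by
    intro i
    induction i with
    | zero => intro _; simp [chAux]
    | succ i ih =>
      intro hi
      have hex := key i hi (ih (by omega))
      show chAux f r a tt (i+1) ≤ tt (i+1) + a
      simp only [chAux]
      rw [dif_pos hex]
      exact hex.choose_spec.2.1
  have incr : ∀ i, i + 1 < N → |f (chAux f r a tt (i+1)) - f (chAux f r a tt i)| = r := by
    intro i hi
    have hex := key i hi (inv i (by omega))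
    show |f (chAux f r a tt (i+1)) - f (chAux f r a tt i)| = r
    simp only [chAux]
    rw [dif_pos hex]
    exact hex.choose_spec.2.2
  have mono1 : ∀ i, i + 1 < N → chAux f r a tt i < chAux f r a tt (i+1) := by
    intro i hi
    have hex := key i hi (inv i (by omega))
    show chAux f r a tt i < chAux f r a tt (i+1)
    conv_rhs => simp only [chAux]
    rw [dif_pos hex]
    exact hex.choose_spec.1
  have mono2 : ∀ j, j < N → ∀ i, i < j → chAux f r a tt i < chAux f r a tt j := by
    intro j
    induction j with
    | zero => omega
    | succ j ihj =>
      intro hj i hij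
      rcases Nat.lt_succ_iff_lt_or_eq.mp hij with h | h
      · exact lt_trans (ihj (by omega) i h) (mono1 j hj)
      · subst h; exact mono1 i hj
  have chlow : ∀ i, i < N → a ≤ chAux f r a tt i := by
    intro i hi
    have htt0 : tt 0 = t ⟨0, hNpos⟩ := dif_pos hNpos
    have h0 : a ≤ chAux f r a tt 0 := by
      show a ≤ tt 0 + a
      rw [htt0]
      have := (tmem ⟨0, hNpos⟩).1
      linarith
    rcases Nat.eq_zero_or_pos i with rfl | hip
    · exact h0
    · exact le_trans h0 (le_of_lt (mono2 i hi 0 hip))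
  have chhigh : ∀ i, i < N → chAux f r a tt i ≤ 1 + a := by
    intro i hi
    have h1 := inv i hi
    have htti : tt i = t ⟨i, hi⟩ := dif_pos hi
    rw [htti] at h1
    have := (tmem ⟨i, hi⟩).2
    linarith
  -- split into two runs
  set c := ((Finset.range N).filter (fun i => chAux f r a tt i ≤ 1)).card with hc
  have hinit := initseg (N := N) (fun i => chAux f r a tt i ≤ 1) (by
    intro i j hij hjN hPj
    rcases Nat.lt_or_ge i j with h | h
    · exact le_trans (le_of_lt (mono2 j hjN i h)) hPj
    · have : i = j := by omega
      subst this; exact hPj)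
  have hcN : c ≤ N := by
    rw [hc]
    exact le_trans (Finset.card_filter_le _ _) (by rw [Finset.card_range])
  rcases le_or_gt N (2*c) with hcase | hcase
  · -- first run
    have hc1 : 1 ≤ c := by omega
    refine ⟨c - 1, ?_, by omega⟩
    set x : Fin (c - 1 + 1) → ℝ := fun j => chAux f r a tt j.1 with hx
    have hpart : IsPartition (c-1) x := by
      constructor
      · intro i j hij
        have hj : (j.1 : ℕ) < N := by omega
        exact mono2 j.1 hj i.1 hij
      · intro j
        have hjN : (j.1 : ℕ) < N := by omega
        refine ⟨?_, ?_⟩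
        · have := chlow j.1 hjN
          have := ha.1
          show (0:ℝ) ≤ chAux f r a tt j.1
          linarith
        · show chAux f r a tt j.1 ≤ 1
          exact (hinit j.1 hjN).mpr (by omega)
    have hincr : ∀ i : Fin (c-1), |f (x i.castSucc) - f (x i.succ)| = r := by
      intro i
      have hi1 : i.1 + 1 < N := by omega
      show |f (chAux f r a tt i.castSucc.1) - f (chAux f r a tt i.succ.1)| = r
      rw [Fin.coe_castSucc, Fin.val_succ, abs_sub_comm]
      exact incr i.1 hi1
    exact prVar_ge f p r (c-1) x hpart hincr
  · -- second run
    have hcN' : c < N := by omega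
    refine ⟨N - c - 1, ?_, by omega⟩
    set x : Fin (N - c - 1 + 1) → ℝ := fun j => chAux f r a tt (c + j.1) - 1 with hx
    have hidx : ∀ j : Fin (N - c - 1 + 1), c + j.1 < N := by
      intro j
      have := j.isLt
      omega
    have hnp : ∀ j : Fin (N - c - 1 + 1), 1 < chAux f r a tt (c + j.1) := by
      intro j
      by_contra hh
      push_neg at hh
      have := (hinit (c + j.1) (hidx j)).mp hh
      omega
    have hpart : IsPartition (N-c-1) x := by
      constructor
      · intro i j hij
        have h2 : c + i.1 < c + j.1 := by
          have : i.1 < j.1 := hij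
          omega
        have := mono2 (c + j.1) (hidx j) (c + i.1) h2
        show chAux f r a tt (c + i.1) - 1 < chAux f r a tt (c + j.1) - 1
        linarith
      · intro j
        refine ⟨?_, ?_⟩
        · have := hnp j
          show (0:ℝ) ≤ chAux f r a tt (c + j.1) - 1
          linarith
        · have := chhigh (c + j.1) (hidx j)
          have haa := ha.2
          show chAux f r a tt (c + j.1) - 1 ≤ 1
          linarith
    have hfshift : ∀ y : ℝ, f (y - 1) = f y := by
      intro y
      have := hper (y - 1)
      rw [sub_add_cancel] at this
      exact this.symm
    have hincr : ∀ i : Fin (N-c-1), |f (x i.castSucc) - f (x i.succ)| = r := by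
      intro i
      have hi1 : c + i.1 + 1 < N := by
        have := i.isLt
        omega
      show |f (chAux f r a tt (c + i.castSucc.1) - 1) - f (chAux f r a tt (c + i.succ.1) - 1)| = r
      rw [Fin.coe_castSucc, Fin.val_succ, hfshift, hfshift, abs_sub_comm]
      rw [show c + (i.1 + 1) = (c + i.1) + 1 by omega]
      exact incr (c + i.1) hi1
    exact prVar_ge f p r (N-c-1) x hpart hincr

end TreeAuxPf
namespace TreeAuxPf
open Set

/-- any exact-`r` chain for `g` inside `[0,1]` has at most `2 N(r/5)` steps -/
lemma chain_card_bound {g : ℝ → ℝ} (hg : Continuous g) {r : ℝ} (hr : 0 < r)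
    {m : ℕ} (y : Fin (m+1) → ℝ) (hmono : StrictMono y) (hmem : ∀ i, y i ∈ Set.Icc (0:ℝ) 1)
    (hincr : ∀ i : Fin m, |g (y i.castSucc) - g (y i.succ)| = r) :
    m ≤ 2 * Nsep (treeDist g) (Set.Icc 0 1) (r/5) := by
  classical
  rcases Nat.eq_zero_or_pos m with rfl | hm
  · omega
  set w : Fin m → ℝ := fun i =>
    if g (y i.succ) ≤ g (y i.castSucc) then y i.castSucc else y i.succ with hw
  set b : Fin m → ℝ := fun i =>
    if g (y i.succ) ≤ g (y i.castSucc) then y i.succ else y i.castSucc with hb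
  have hwb : ∀ i : Fin m, g (b i) = g (w i) - r := by
    intro i
    have := hincr i
    rw [hw, hb]
    dsimp only
    split_ifs with h
    · rw [abs_of_nonneg (by linarith)] at this; linarith
    · rw [abs_of_nonpos (by linarith)] at this; linarith
  have hwlow : ∀ i : Fin m, y i.castSucc ≤ w i := by
    intro i; rw [hw]; dsimp only; split_ifs
    · exact le_refl _
    · exact (hmono (Fin.castSucc_lt_succ (i := i))).le
  have hwhigh : ∀ i : Fin m, w i ≤ y i.succ := by
    intro i; rw [hw]; dsimp only; split_ifs
    · exact (hmono (Fin.castSucc_lt_succ (i := i))).le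
    · exact le_refl _
  have hblow : ∀ i : Fin m, y i.castSucc ≤ b i := by
    intro i; rw [hb]; dsimp only; split_ifs
    · exact (hmono (Fin.castSucc_lt_succ (i := i))).le
    · exact le_refl _
  have hbhigh : ∀ i : Fin m, b i ≤ y i.succ := by
    intro i; rw [hb]; dsimp only; split_ifs
    · exact le_refl _
    · exact (hmono (Fin.castSucc_lt_succ (i := i))).le
  have hwmem : ∀ i : Fin m, w i ∈ Set.Icc (0:ℝ) 1 := by
    intro i; rw [hw]; dsimp only; split_ifs
    · exact hmem _
    · exact hmem _
  -- take a maximum-cardinality (r/5)-separated subset of the tops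
  set W : Finset ℝ := Finset.image w Finset.univ with hW
  set 𝒮 : Finset (Finset ℝ) :=
    W.powerset.filter (fun s => ∀ u ∈ s, ∀ v ∈ s, u ≠ v → r/5 < treeDist g u v) with h𝒮
  have hempty : ∅ ∈ 𝒮 := by
    rw [h𝒮, Finset.mem_filter, Finset.mem_powerset]
    exact ⟨Finset.empty_subset _, by simp⟩
  obtain ⟨S, hSmem, hSmax⟩ := Finset.exists_max_image 𝒮 Finset.card ⟨∅, hempty⟩
  have hSsub : S ⊆ W := Finset.mem_powerset.mp (Finset.mem_filter.mp hSmem).1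
  have hSsep : ∀ u ∈ S, ∀ v ∈ S, u ≠ v → r/5 < treeDist g u v :=
    (Finset.mem_filter.mp hSmem).2
  have hcover : ∀ u ∈ W, ∃ s ∈ S, treeDist g s u ≤ r/5 := by
    intro u hu
    by_contra hcon
    push_neg at hcon
    have huS : u ∉ S := fun huS => by
      have := hcon u huS
      rw [treeDist_self] at this
      linarith
    have hins : insert u S ∈ 𝒮 := by
      rw [h𝒮, Finset.mem_filter, Finset.mem_powerset]
      refine ⟨Finset.insert_subset hu hSsub, ?_⟩
      intro p hp q hq hne
      rcases Finset.mem_insert.mp hp with rfl | hp2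
      · rcases Finset.mem_insert.mp hq with rfl | hq2
        · exact absurd rfl hne
        · rw [treeDist_comm]; exact hcon q hq2
      · rcases Finset.mem_insert.mp hq with hqe | hq2
        · subst hqe; exact hcon p hp2
        · exact hSsep p hp2 q hq2 hne
    have := hSmax _ hins
    rw [Finset.card_insert_of_notMem huS] at this
    omega
  -- assignment
  have hsel : ∀ i : Fin m, ∃ s ∈ S, treeDist g s (w i) ≤ r/5 := fun i =>
    hcover (w i) (Finset.mem_image_of_mem w (Finset.mem_univ i))
  set σ : Fin m → ℝ := fun i => (hsel i).choose with hσ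
  have hσS : ∀ i, σ i ∈ S := fun i => (hsel i).choose_spec.1
  have hσd : ∀ i, treeDist g (σ i) (w i) ≤ r/5 := fun i => (hsel i).choose_spec.2
  -- no 3 indices share an assigned point
  have bad : ∀ i j k : Fin m, i < j → j < k → σ i = σ j → σ j = σ k → False := by
    intro i j k hij hjk he1 he2
    have dik : treeDist g (w i) (w k) ≤ 2*(r/5) := by
      have h1 := hσd i
      have h3 := hσd k
      rw [he1, he2] at h1
      have htri := treeDist_triangle hg (w i) (σ k) (w k)
      rw [treeDist_comm g (w i) (σ k)] at htri
      linarith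
    have dij : treeDist g (w i) (w j) ≤ 2*(r/5) := by
      have h1 := hσd i
      have h2 := hσd j
      rw [he1] at h1
      have htri := treeDist_triangle hg (w i) (σ j) (w j)
      rw [treeDist_comm g (w i) (σ j)] at htri
      linarith
    have djk : treeDist g (w j) (w k) ≤ 2*(r/5) := by
      have h2 := hσd j
      have h3 := hσd k
      rw [he2] at h2
      have htri := treeDist_triangle hg (w j) (σ k) (w k)
      rw [treeDist_comm g (w j) (σ k)] at htri
      linarith
    have vij : |g (w i) - g (w j)| ≤ 2*(r/5) := le_trans (abs_le_treeDist hg _ _) dij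
    have vjk : |g (w j) - g (w k)| ≤ 2*(r/5) := le_trans (abs_le_treeDist hg _ _) djk
    -- the bottom of edge j lies between w i and w k
    have hseq : y i.succ ≤ y j.castSucc := by
      rcases eq_or_lt_of_le (show (i.1 : ℕ) + 1 ≤ j.1 from hij) with h | h
      · exact le_of_eq (congrArg y (by rw [Fin.ext_iff]; simpa using h))
      · exact (hmono (show i.succ < j.castSucc by rw [Fin.lt_def]; simpa using h)).le
    have hseq2 : y j.succ ≤ y k.castSucc := by
      rcases eq_or_lt_of_le (show (j.1 : ℕ) + 1 ≤ k.1 from hjk) with h | h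
      · exact le_of_eq (congrArg y (by rw [Fin.ext_iff]; simpa using h))
      · exact (hmono (show j.succ < k.castSucc by rw [Fin.lt_def]; simpa using h)).le
    have h1 : w i ≤ b j := le_trans (hwhigh i) (le_trans hseq (hblow j))
    have h2 : b j ≤ w k := le_trans (hbhigh j) (le_trans hseq2 (hwlow k))
    have hik : w i ≤ w k := le_trans h1 h2
    have hminf : sInf (g '' Set.Icc (w i) (w k)) ≤ g (b j) := mInf_le hg ⟨h1, h2⟩
    have hdik : treeDist g (w i) (w k) = g (w i) + g (w k) - 2 * sInf (g '' Set.Icc (w i) (w k)) :=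
      treeDist_eq g hik
    have hbj := hwb j
    have vij' := abs_le.mp vij
    have vjk' := abs_le.mp vjk
    linarith [vij'.1, vij'.2, vjk'.1, vjk'.2]
  -- fibers have cardinality ≤ 2
  have hfiber : ∀ s ∈ S, (Finset.univ.filter (fun i : Fin m => σ i = s)).card ≤ 2 := by
    intro s hs
    by_contra hcon
    push_neg at hcon
    obtain ⟨i, j, k, hi, hj, hk, hij, hik, hjk⟩ := Finset.two_lt_card_iff.mp hcon
    have hσi := (Finset.mem_filter.mp hi).2
    have hσj := (Finset.mem_filter.mp hj).2
    have hσk := (Finset.mem_filter.mp hk).2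
    have heq : ∀ p q : Fin m, σ p = s → σ q = s → σ p = σ q := fun p q h1 h2 => by rw [h1, h2]
    rcases lt_trichotomy i j with h1 | h1 | h1
    · rcases lt_trichotomy j k with h2 | h2 | h2
      · exact bad i j k h1 h2 (heq _ _ hσi hσj) (heq _ _ hσj hσk)
      · exact hjk h2
      · rcases lt_trichotomy i k with h3 | h3 | h3
        · exact bad i k j h3 h2 (heq _ _ hσi hσk) (heq _ _ hσk hσj)
        · exact hik h3
        · exact bad k i j h3 h1 (heq _ _ hσk hσi) (heq _ _ hσi hσj)
    · exact hij h1
    · rcases lt_trichotomy i k with h2 | h2 | h2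
      · exact bad j i k h1 h2 (heq _ _ hσj hσi) (heq _ _ hσi hσk)
      · exact hik h2
      · rcases lt_trichotomy j k with h3 | h3 | h3
        · exact bad j k i h3 h2 (heq _ _ hσj hσk) (heq _ _ hσk hσi)
        · exact hjk h3
        · exact bad k j i h3 h1 (heq _ _ hσk hσj) (heq _ _ hσj hσi)
  have hcount : (Finset.univ : Finset (Fin m)).card = ∑ s ∈ S, (Finset.univ.filter (fun i : Fin m => σ i = s)).card :=
    Finset.card_eq_sum_card_fiberwise (fun i _ => hσS i)
  have hm2 : m ≤ 2 * S.card := by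
    have h1 : (Finset.univ : Finset (Fin m)).card = m := by simp
    rw [h1] at hcount
    calc m = ∑ s ∈ S, (Finset.univ.filter (fun i : Fin m => σ i = s)).card := hcount
      _ ≤ ∑ _s ∈ S, 2 := Finset.sum_le_sum hfiber
      _ = S.card * 2 := by rw [Finset.sum_const, smul_eq_mul]
      _ = 2 * S.card := by ring
  have hScard : S.card ≤ Nsep (treeDist g) (Set.Icc 0 1) (r/5) := by
    apply le_nsep hg (by linarith)
    · intro u hu
      obtain ⟨i, _, rfl⟩ := Finset.mem_image.mp (hSsub (by exact_mod_cast hu))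
      exact hwmem i
    · exact hSsep
  omega

end TreeAuxPf
namespace TreeAuxPf
open Set

lemma partition_card_bound {f : ℝ → ℝ} (hf : Continuous f) (hper : ∀ x, f (x + 1) = f x)
    {a : ℝ} (ha : a ∈ Set.Icc (0:ℝ) 1) {r : ℝ} (hr : 0 < r)
    {n : ℕ} (x : Fin (n+1) → ℝ) (hpart : IsPartition n x)
    (hincr : ∀ i : Fin n, |f (x i.castSucc) - f (x i.succ)| = r) :
    n ≤ 4 * Nsep (treeDist (fun z => f (z+a) - f a)) (Set.Icc 0 1) (r/5) + 1 := by
  classical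
  set g : ℝ → ℝ := fun z => f (z + a) - f a with hgdef
  have hg : Continuous g := (hf.comp (continuous_id.add continuous_const)).sub continuous_const
  obtain ⟨hxmono, hxmem⟩ := hpart
  set M := Nsep (treeDist g) (Set.Icc 0 1) (r/5) with hM
  set X : ℕ → ℝ := fun i => if h : i < n+1 then x ⟨i, h⟩ else 2 with hX
  have hXeq : ∀ i (h : i < n+1), X i = x ⟨i, h⟩ := fun i h => dif_pos h
  have hXmono : ∀ i j, i < j → j < n+1 → X i < X j := by
    intro i j hij hj
    rw [hXeq i (by omega), hXeq j hj]
    exact hxmono (by rw [Fin.lt_def]; simpa using hij)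
  have hXmem : ∀ i, i < n+1 → X i ∈ Set.Icc (0:ℝ) 1 := by
    intro i hi; rw [hXeq i hi]; exact hxmem _
  have hXincr : ∀ i, i + 1 < n + 1 → |f (X i) - f (X (i+1))| = r := by
    intro i hi
    rw [hXeq i (by omega), hXeq (i+1) hi]
    have := hincr ⟨i, by omega⟩
    simpa using this
  -- value identities for g
  have hgval : ∀ z : ℝ, g (z - a) = f z - f a := by
    intro z
    show f (z - a + a) - f a = f z - f a
    rw [sub_add_cancel]
  have hgval1 : ∀ z : ℝ, g (z - a + 1) = f z - f a := by
    intro z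
    show f (z - a + 1 + a) - f a = f z - f a
    rw [show z - a + 1 + a = (z) + 1 by ring, hper]
  -- split
  set c := ((Finset.range (n+1)).filter (fun i => X i < a)).card with hc
  have hinit := initseg (N := n+1) (fun i => X i < a) (by
    intro i j hij hjN hPj
    rcases Nat.lt_or_ge i j with h | h
    · exact lt_trans (hXmono i j h hjN) hPj
    · have : i = j := by omega
      subst this; exact hPj)
  have hcN : c ≤ n+1 := by
    rw [hc]
    exact le_trans (Finset.card_filter_le _ _) (by rw [Finset.card_range])
  -- run 1 : indices < c (where X < a), shifted by -a+1
  have run1 : ∀ m₁ : ℕ, m₁ + 1 ≤ c → m₁ ≤ 2 * M := by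
    intro m₁ hm₁
    apply chain_card_bound hg hr (fun j : Fin (m₁+1) => X j.1 - a + 1)
    · intro i j hij
      have h2 : X i.1 < X j.1 := hXmono i.1 j.1 hij (by omega)
      simpa using h2
    · intro j
      have hja : X j.1 < a := (hinit j.1 (by omega)).mpr (by omega)
      have hjm := hXmem j.1 (by omega)
      constructor
      · have := ha.2; linarith [hjm.1]
      · linarith [hjm.1]
    · intro i
      have hi1 : i.1 + 1 < n + 1 := by omega
      show |g (X i.castSucc.1 - a + 1) - g (X i.succ.1 - a + 1)| = r
      rw [Fin.coe_castSucc, Fin.val_succ, hgval1, hgval1]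
      rw [show f (X i.1) - f a - (f (X (i.1+1)) - f a) = f (X i.1) - f (X (i.1+1)) by ring]
      exact hXincr i.1 hi1
  -- run 2 : indices ≥ c (where X ≥ a), shifted by -a
  have run2 : ∀ m₂ : ℕ, c + m₂ + 1 ≤ n + 1 → m₂ ≤ 2 * M := by
    intro m₂ hm₂
    apply chain_card_bound hg hr (fun j : Fin (m₂+1) => X (c + j.1) - a)
    · intro i j hij
      have h2 : X (c + i.1) < X (c + j.1) := hXmono _ _ (by omega) (by omega)
      simpa using h2
    · intro j
      have hja : ¬ (X (c + j.1) < a) := fun hh => by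
        have := (hinit (c + j.1) (by omega)).mp hh
        omega
      push_neg at hja
      have hjm := hXmem (c + j.1) (by omega)
      constructor
      · linarith
      · have := ha.1; linarith [hjm.2]
    · intro i
      have hi1 : c + i.1 + 1 < n + 1 := by omega
      show |g (X (c + i.castSucc.1) - a) - g (X (c + i.succ.1) - a)| = r
      rw [Fin.coe_castSucc, Fin.val_succ, hgval, hgval]
      rw [show f (X (c + i.1)) - f a - (f (X (c + (i.1+1))) - f a)
            = f (X (c + i.1)) - f (X ((c + i.1) + 1)) by rw [show c + (i.1+1) = c + i.1 + 1 by omega]; ring]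
      exact hXincr (c + i.1) hi1
  rcases Nat.eq_zero_or_pos c with hc0 | hc1
  · -- all indices have X ≥ a : single run of length n
    have := run2 n (by omega)
    omega
  · rcases Nat.lt_or_ge c (n+1) with hclt | hcge
    · -- two runs: lengths (c-1) and (n - c)
      have h1 := run1 (c-1) (by omega)
      have h2 := run2 (n - c) (by omega)
      omega
    · -- all indices have X < a : single run of length n
      have := run1 n (by omega)
      omega

lemma prVar_upper {f : ℝ → ℝ} (hf : Continuous f) (hper : ∀ x, f (x + 1) = f x)
    {a : ℝ} (ha : a ∈ Set.Icc (0:ℝ) 1) (p : ℝ) {r : ℝ} (hr : 0 < r) :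
    prVar f p r ≤ ENNReal.ofReal
      (((4 * Nsep (treeDist (fun z => f (z+a) - f a)) (Set.Icc 0 1) (r/5) + 1 : ℕ) : ℝ) * r^p) := by
  apply iSup_le; intro n
  apply iSup_le; intro x
  apply iSup_le; intro hpart
  apply iSup_le; intro hincr
  have hn := partition_card_bound hf hper ha hr x hpart hincr
  have hv : varSum f p n x = (n:ℝ) * r^p := by
    unfold varSum
    rw [Finset.sum_congr rfl (fun i _ => by rw [hincr i])]
    rw [Finset.sum_const, Finset.card_univ, Fintype.card_fin, nsmul_eq_mul]
  rw [hv]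
  apply ENNReal.ofReal_le_ofReal
  apply mul_le_mul_of_nonneg_right _ (Real.rpow_nonneg hr.le p)
  exact_mod_cast hn

end TreeAuxPf

noncomputable section

/-- If the real tree of a non-constant continuous circle mapping `f` is a doubling metric
space, then there is a universal constant `C > 0` such that for all `ε > 0` there is
`r₀ > 0` with `C⁻¹ V_r^p(f) - ε ≤ N_r(T(f))·r^p ≤ C V_r^p(f) + ε` for all `0 < r < r₀`. -/
theorem prVar_comparable_Nsep_of_doubling (f : ℝ → ℝ) (hf : Continuous f)
    (hper : ∀ x, f (x + 1) = f x) (hnc : ∃ x y, f x ≠ f y)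
    (a : ℝ) (ha : a ∈ Set.Icc (0 : ℝ) 1) (hmin : ∀ x ∈ Set.Icc (0 : ℝ) 1, f a ≤ f x)
    (p : ℝ) (hp : 1 ≤ p)
    (hdoub : ∃ K : ℕ, ∀ x ∈ Set.Icc (0 : ℝ) 1, ∀ R : ℝ, 0 < R →
      ∃ s : Finset ℝ, (s : Set ℝ) ⊆ Set.Icc (0 : ℝ) 1 ∧ s.card ≤ K ∧
        ∀ y ∈ Set.Icc (0 : ℝ) 1,
          treeDist (fun z => f (z + a) - f a) x y < 2 * R →
            ∃ c ∈ s, treeDist (fun z => f (z + a) - f a) c y < R) :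
    ∃ C : ℝ, 0 < C ∧ ∀ ε : ℝ, 0 < ε → ∃ r₀ : ℝ, 0 < r₀ ∧ ∀ r : ℝ, 0 < r → r < r₀ →
      ENNReal.ofReal C⁻¹ * prVar f p r - ENNReal.ofReal ε ≤
        (Nsep (treeDist (fun z => f (z + a) - f a)) (Set.Icc 0 1) r : ℝ≥0∞) *
          ENNReal.ofReal (r ^ p) ∧
      (Nsep (treeDist (fun z => f (z + a) - f a)) (Set.Icc 0 1) r : ℝ≥0∞) *
          ENNReal.ofReal (r ^ p) ≤
        ENNReal.ofReal C * prVar f p r + ENNReal.ofReal ε := by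
  classical
  obtain ⟨K, hdou⟩ := hdoub
  set g : ℝ → ℝ := fun z => f (z + a) - f a with hgdef
  have hg : Continuous g := (hf.comp (continuous_id.add continuous_const)).sub continuous_const
  -- K ≥ 1
  have hK1 : 1 ≤ K := by
    obtain ⟨s, hs1, hs2, hs3⟩ := hdou 0 (by norm_num) 1 one_pos
    have h0 : treeDist g 0 0 < 2 * 1 := by
      rw [TreeAuxPf.treeDist_self]; norm_num
    obtain ⟨c, hc, -⟩ := hs3 0 (by norm_num) h0
    have : 0 < s.card := Finset.card_pos.mpr ⟨c, hc⟩
    omega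
  set C : ℝ := 4 * (K:ℝ)^9 + 2 * (K:ℝ)^6 + 1 with hC
  have hK0 : (0:ℝ) ≤ K := Nat.cast_nonneg K
  have hK1' : (1:ℝ) ≤ K := by exact_mod_cast hK1
  have hKp9 : (1:ℝ) ≤ (K:ℝ)^9 := by
    simpa using pow_le_pow_left₀ (by norm_num : (0:ℝ) ≤ 1) hK1' 9
  have hKp6 : (1:ℝ) ≤ (K:ℝ)^6 := by
    simpa using pow_le_pow_left₀ (by norm_num : (0:ℝ) ≤ 1) hK1' 6
  have hCpos : 0 < C := by rw [hC]; nlinarith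
  have hC1 : 1 ≤ C := by rw [hC]; nlinarith
  refine ⟨C, hCpos, ?_⟩
  intro ε hε
  refine ⟨min 1 (ε / C), lt_min one_pos (div_pos hε hCpos), ?_⟩
  intro r hr hrlt
  have hr1 : r < 1 := lt_of_lt_of_le hrlt (min_le_left _ _)
  have hrε : C * r < ε := by
    have h2 : r < ε / C := lt_of_lt_of_le hrlt (min_le_right _ _)
    rw [lt_div_iff₀ hCpos] at h2
    linarith
  have hrp : r ^ p ≤ r := by
    have := Real.rpow_le_rpow_of_exponent_ge hr hr1.le hp
    rwa [Real.rpow_one] at this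
  have hrp0 : 0 ≤ r ^ p := Real.rpow_nonneg hr.le p
  set Nr := Nsep (treeDist g) (Set.Icc 0 1) r with hNr
  -- upper bound for prVar
  have hup := TreeAuxPf.prVar_upper hf hper ha p hr
  -- lower bound for prVar
  obtain ⟨n₀, hlow, hsplit⟩ := TreeAuxPf.prVar_lower hf hper ha p hr
  -- doubling comparisons
  have h5 : Nsep (treeDist g) (Set.Icc 0 1) (r/5) ≤ K^9 * Nr :=
    TreeAuxPf.nsep_fifth hg hdou hr
  have h4 : Nr ≤ K^6 * Nsep (treeDist g) (Set.Icc 0 1) (4*r) :=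
    TreeAuxPf.nsep_quad hg hdou hr
  have hNn : Nr ≤ K^6 * (2*(n₀+1)) :=
    le_trans h4 (Nat.mul_le_mul_left _ hsplit)
  constructor
  · -- lower inequality
    rw [tsub_le_iff_right]
    have hreal : C⁻¹ * (((4 * Nsep (treeDist g) (Set.Icc 0 1) (r/5) + 1 : ℕ) : ℝ) * r^p)
        ≤ (Nr : ℝ) * r^p + ε := by
      have hcast : ((4 * Nsep (treeDist g) (Set.Icc 0 1) (r/5) + 1 : ℕ) : ℝ)
          ≤ 4 * (K:ℝ)^9 * (Nr:ℝ) + 1 := by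
        have h' : ((Nsep (treeDist g) (Set.Icc 0 1) (r/5) : ℕ) : ℝ) ≤ (K:ℝ)^9 * (Nr:ℝ) := by
          exact_mod_cast h5
        push_cast
        nlinarith
      have hNr0 : (0:ℝ) ≤ (Nr:ℝ) := Nat.cast_nonneg _
      have step1 : C⁻¹ * (((4 * Nsep (treeDist g) (Set.Icc 0 1) (r/5) + 1 : ℕ) : ℝ) * r^p)
          ≤ C⁻¹ * ((C * Nr + 1) * r^p) := by
        apply mul_le_mul_of_nonneg_left _ (inv_nonneg.mpr hCpos.le)
        apply mul_le_mul_of_nonneg_right _ hrp0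
        refine le_trans hcast ?_
        have hNr0' : (0:ℝ) ≤ (Nr:ℝ) := Nat.cast_nonneg _
        have : 4 * (K:ℝ)^9 * (Nr:ℝ) ≤ C * (Nr:ℝ) := by
          apply mul_le_mul_of_nonneg_right _ hNr0'
          rw [hC]; linarith
        linarith
      have step2 : C⁻¹ * ((C * Nr + 1) * r^p) = (Nr:ℝ) * r^p + C⁻¹ * r^p := by
        field_simp
      have step3 : C⁻¹ * r^p ≤ ε := by
        have h1 : C⁻¹ ≤ 1 := inv_le_one_of_one_le₀ hC1
        have h2 : C⁻¹ * r^p ≤ 1 * r^p := mul_le_mul_of_nonneg_right h1 hrp0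
        have h3 : r ≤ C * r := le_mul_of_one_le_left hr.le hC1
        linarith
      linarith
    calc ENNReal.ofReal C⁻¹ * prVar f p r
        ≤ ENNReal.ofReal C⁻¹ *
          ENNReal.ofReal (((4 * Nsep (treeDist g) (Set.Icc 0 1) (r/5) + 1 : ℕ) : ℝ) * r^p) :=
          mul_le_mul_right hup _
      _ = ENNReal.ofReal (C⁻¹ * (((4 * Nsep (treeDist g) (Set.Icc 0 1) (r/5) + 1 : ℕ) : ℝ) * r^p)) := by
          rw [← ENNReal.ofReal_mul (inv_nonneg.mpr hCpos.le)]
      _ ≤ ENNReal.ofReal ((Nr : ℝ) * r^p + ε) := ENNReal.ofReal_le_ofReal hreal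
      _ = ENNReal.ofReal ((Nr : ℝ) * r^p) + ENNReal.ofReal ε := by
          rw [ENNReal.ofReal_add (by positivity) hε.le]
      _ = (Nr : ℝ≥0∞) * ENNReal.ofReal (r^p) + ENNReal.ofReal ε := by
          rw [ENNReal.ofReal_mul (Nat.cast_nonneg _), ENNReal.ofReal_natCast]
  · -- upper inequality
    have hreal : (Nr : ℝ) * r^p ≤ C * ((n₀:ℝ) * r^p) + ε := by
      have hcast : (Nr : ℝ) ≤ 2 * (K:ℝ)^6 * (n₀:ℝ) + 2 * (K:ℝ)^6 := by
        have h2 : (Nr:ℝ) ≤ ((K^6 * (2*(n₀+1)) : ℕ) : ℝ) := by exact_mod_cast hNn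
        push_cast at h2
        linarith
      have hc2 : 2 * (K:ℝ)^6 ≤ C := by rw [hC]; linarith
      have h1 : (Nr : ℝ) * r^p ≤ (2 * (K:ℝ)^6 * (n₀:ℝ) + 2 * (K:ℝ)^6) * r^p :=
        mul_le_mul_of_nonneg_right hcast hrp0
      have hn0 : (0:ℝ) ≤ (n₀:ℝ) * r^p := mul_nonneg (Nat.cast_nonneg _) hrp0
      have h2 : 2 * (K:ℝ)^6 * ((n₀:ℝ) * r^p) ≤ C * ((n₀:ℝ) * r^p) :=
        mul_le_mul_of_nonneg_right hc2 hn0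
      have h4 : (2 * (K:ℝ)^6) * r^p ≤ C * r^p := mul_le_mul_of_nonneg_right hc2 hrp0
      have h5 : C * r^p ≤ C * r := mul_le_mul_of_nonneg_left hrp hCpos.le
      have hexp : (2 * (K:ℝ)^6 * (n₀:ℝ) + 2 * (K:ℝ)^6) * r^p
          = 2 * (K:ℝ)^6 * ((n₀:ℝ) * r^p) + (2 * (K:ℝ)^6) * r^p := by ring
      rw [hexp] at h1
      linarith
    calc (Nr : ℝ≥0∞) * ENNReal.ofReal (r^p)
        = ENNReal.ofReal ((Nr : ℝ) * r^p) := by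
          rw [ENNReal.ofReal_mul (Nat.cast_nonneg _), ENNReal.ofReal_natCast]
      _ ≤ ENNReal.ofReal (C * ((n₀:ℝ) * r^p) + ε) := ENNReal.ofReal_le_ofReal hreal
      _ = ENNReal.ofReal (C * ((n₀:ℝ) * r^p)) + ENNReal.ofReal ε := by
          rw [ENNReal.ofReal_add (by positivity) hε.le]
      _ = ENNReal.ofReal C * ENNReal.ofReal ((n₀:ℝ) * r^p) + ENNReal.ofReal ε := by
          rw [ENNReal.ofReal_mul hCpos.le]
      _ ≤ ENNReal.ofReal C * prVar f p r + ENNReal.ofReal ε := by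
          exact add_le_add_left (mul_le_mul_right hlow _) _

end
end
end
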